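/- arXiv:math/0609698 — 6 statements merged into one kernel-verified Lean document; each statement's English description precedes it below -/
import Mathlib

section
/- Let P = (V_0, …, V_{n-1}) be a polygon in ℝ² with n ≥ 5 (the vertices are not assumed distinct). If the reduced polygon P^(α) is convex for every α ∈ {0, …, n-1}, then P is convex. -/
open Set

set_option maxHeartbeats 1000000

noncomputable section

/-- The Euclidean plane. -/
abbrev Pl := EuclideanSpace ℝ (Fin 2)

/-- The `j`-th vertex of the polygon given by the list `L`, with indices taken
cyclically (so that `V_n = V_0`). -/
def vtx (L : List Pl) (j : ℕ) : Pl := L.getD (j % L.length) 0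

/-- The set of vertices of the polygon `L`. -/
def vertexSet (L : List Pl) : Set Pl := {x | x ∈ L}

/-- The union of the edges `[V_i, V_{i+1}]`, `i = 0, …, n-1` (with `V_n = V_0`). -/
def edg (L : List Pl) : Set Pl :=
  ⋃ i ∈ Finset.range L.length, segment ℝ (vtx L i) (vtx L (i + 1))

/-- A polygon is convex if the union of its edges coincides with the boundary of
the convex hull of its vertex set. -/
def IsConvexPolygon (L : List Pl) : Prop :=
  edg L = frontier (convexHull ℝ (vertexSet L))

/-- A polygon is quasi-convex if the union of its edges is contained in the boundary
of the convex hull of its vertex set. -/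
def IsQuasiConvex (L : List Pl) : Prop :=
  edg L ⊆ frontier (convexHull ℝ (vertexSet L))

/-- A polygon is strict if any three of its vertices (with increasing indices)
are non-collinear. -/
def IsStrict (L : List Pl) : Prop :=
  ∀ i j k : ℕ, i < j → j < k → k < L.length →
    ¬ Collinear ℝ ({vtx L i, vtx L j, vtx L k} : Set Pl)

/-- The points of `S` lie to one side of the segment `[A, B]`: there is a line
(the zero set of `f · = c` with `f ≠ 0`) containing `A` and `B` which is the
boundary of a closed half-plane `{x | f x ≤ c}` containing `S`. -/
def OneSide (A B : Pl) (S : Set Pl) : Prop :=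
  ∃ (f : Pl →ₗ[ℝ] ℝ) (c : ℝ), f ≠ 0 ∧ f A = c ∧ f B = c ∧ ∀ p ∈ S, f p ≤ c

/-- `ℓ` is a line in the plane. -/
def IsLine (ℓ : Set Pl) : Prop :=
  ∃ (f : Pl →ₗ[ℝ] ℝ) (c : ℝ), f ≠ 0 ∧ ℓ = {x | f x = c}

/-- The line `ℓ` is supporting to the set `S`: it meets `S` and is the boundary of
a closed half-plane containing `S`. -/
def IsSuppLine (ℓ S : Set Pl) : Prop :=
  (ℓ ∩ S).Nonempty ∧
    ∃ (f : Pl →ₗ[ℝ] ℝ) (c : ℝ), f ≠ 0 ∧ ℓ = {x | f x = c} ∧ ∀ x ∈ S, f x ≤ c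

/-- The half-open segment `[A, B) = {(1-t)A + tB : 0 ≤ t < 1}` if `A ≠ B`,
and `∅` if `A = B`. -/
def hseg (A B : Pl) : Set Pl :=
  {x | A ≠ B ∧ ∃ t : ℝ, 0 ≤ t ∧ t < 1 ∧ x = (1 - t) • A + t • B}

/-- A 2-polytope: a compact convex subset of the plane of dimension 2 whose set of
extreme points is finite. -/
def IsPolytope2 (K : Set Pl) : Prop :=
  IsCompact K ∧ Convex ℝ K ∧
    Module.finrank ℝ (affineSpan ℝ K).direction = 2 ∧
    (Set.extremePoints ℝ K).Finite

/-! ### Auxiliary material -/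

section LinearAlgebra

/-- The linear functional `y ↦ A * y 0 + B * y 1`. -/
def lin (A B : ℝ) : Pl →ₗ[ℝ] ℝ where
  toFun y := A * y 0 + B * y 1
  map_add' x y := by simp [PiLp.add_apply]; ring
  map_smul' c x := by simp [PiLp.smul_apply]; ring

lemma lin_apply (A B : ℝ) (y : Pl) : lin A B y = A * y 0 + B * y 1 := rfl

lemma pl_ext {y z : Pl} (h0 : y 0 = z 0) (h1 : y 1 = z 1) : y = z := by
  ext i
  fin_cases i <;> assumption

lemma lin_ne_zero {A B : ℝ} (h : ¬ (A = 0 ∧ B = 0)) : lin A B ≠ 0 := by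
  intro hf
  apply h
  constructor
  · have := congrArg (fun f : Pl →ₗ[ℝ] ℝ => f (EuclideanSpace.single 0 1)) hf
    simpa [lin_apply, EuclideanSpace.single_apply] using this
  · have := congrArg (fun f : Pl →ₗ[ℝ] ℝ => f (EuclideanSpace.single 1 1)) hf
    simpa [lin_apply, EuclideanSpace.single_apply] using this

/-- Every linear functional on the plane has the form `lin A B`. -/
lemma lin_repr (f : Pl →ₗ[ℝ] ℝ) (y : Pl) :
    f y = (f (EuclideanSpace.single 0 1)) * y 0 + (f (EuclideanSpace.single 1 1)) * y 1 := by
  have hy : y = y 0 • (EuclideanSpace.single 0 1 : Pl) + y 1 • (EuclideanSpace.single 1 1 : Pl) := by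
    apply pl_ext <;> simp [PiLp.add_apply, PiLp.smul_apply, EuclideanSpace.single_apply]
  calc f y = f (y 0 • (EuclideanSpace.single 0 1 : Pl) + y 1 • (EuclideanSpace.single 1 1 : Pl)) := by
        rw [← hy]
  _ = y 0 * f (EuclideanSpace.single 0 1) + y 1 * f (EuclideanSpace.single 1 1) := by
        rw [map_add, map_smul, map_smul]; simp [smul_eq_mul]
  _ = _ := by ring

/-- The "rotation" of a vector `d`, as a linear functional vanishing at `d`. -/
def rot (d : Pl) : Pl →ₗ[ℝ] ℝ := lin (-(d 1)) (d 0)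

lemma rot_apply (d y : Pl) : rot d y = -(d 1) * y 0 + d 0 * y 1 := rfl

lemma rot_self (d : Pl) : rot d d = 0 := by simp [rot_apply]; ring

lemma rot_ne_zero {d : Pl} (hd : d ≠ 0) : rot d ≠ 0 := by
  apply lin_ne_zero
  rintro ⟨h1, h0⟩
  apply hd
  have h1' : d 1 = 0 := by linarith
  exact pl_ext (by simpa using h0) (by simpa using h1')

/-- injectivity of the pair (lin A B, lin (-B) A). -/
lemma lin_pair_inj {A B : ℝ} (h : ¬ (A = 0 ∧ B = 0)) {y z : Pl}
    (h1 : lin A B y = lin A B z) (h2 : lin (-B) A y = lin (-B) A z) : y = z := by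
  rw [lin_apply, lin_apply] at h1 h2
  have hAB : A^2 + B^2 ≠ 0 := by
    intro hc
    exact h ⟨by nlinarith [sq_nonneg A, sq_nonneg B], by nlinarith [sq_nonneg A, sq_nonneg B]⟩
  have e0 : (A^2 + B^2) * (y 0 - z 0) = 0 := by linear_combination A * h1 - B * h2
  have e1 : (A^2 + B^2) * (y 1 - z 1) = 0 := by linear_combination B * h1 + A * h2
  have h00 : y 0 - z 0 = 0 := by
    rcases mul_eq_zero.1 e0 with h | h
    · exact absurd h hAB
    · exact h
  have h11 : y 1 - z 1 = 0 := by
    rcases mul_eq_zero.1 e1 with h | h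
    · exact absurd h hAB
    · exact h
  apply pl_ext <;> linarith

/-- A functional vanishing at `d ≠ 0` is a multiple of `rot d`. -/
lemma prop_rot {d : Pl} (hd : d ≠ 0) (f : Pl →ₗ[ℝ] ℝ) (hfd : f d = 0) :
    ∃ lam : ℝ, ∀ y, f y = lam * rot d y := by
  set A := f (EuclideanSpace.single 0 1) with hA
  set B := f (EuclideanSpace.single 1 1) with hB
  have hrepr : ∀ y, f y = A * y 0 + B * y 1 := lin_repr f
  have hfd' : A * d 0 + B * d 1 = 0 := by rw [← hrepr d]; exact hfd
  have hd' : ¬ (d 0 = 0 ∧ d 1 = 0) := by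
    rintro ⟨h0, h1⟩; exact hd (pl_ext (by simpa using h0) (by simpa using h1))
  by_cases h0 : d 0 = 0
  · have h1 : d 1 ≠ 0 := fun hc => hd' ⟨h0, hc⟩
    refine ⟨-A / d 1, fun y => ?_⟩
    rw [hrepr y, rot_apply]
    have hB0 : B = 0 := by
      have := hfd'; rw [h0] at this; simp at this
      rcases this with h | h
      · exact h
      · exact absurd h h1
    rw [hB0, h0]
    field_simp
    ring
  · refine ⟨B / d 0, fun y => ?_⟩
    rw [hrepr y, rot_apply]
    have hA' : A = -(B * d 1) / d 0 := by field_simp; linarith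
    rw [hA']
    field_simp

lemma rot_span {d y : Pl} (hy : y ∈ Submodule.span ℝ ({d} : Set Pl)) : rot d y = 0 := by
  rcases Submodule.mem_span_singleton.1 hy with ⟨t, rfl⟩
  rw [map_smul, rot_self, smul_zero]

/-- Supporting functional at a non-interior point of a convex set in the plane. -/
lemma supp {s : Set Pl} (hs : Convex ℝ s) {p : Pl} (hp : p ∈ s) (hip : p ∉ interior s) :
    ∃ f : Pl →ₗ[ℝ] ℝ, f ≠ 0 ∧ ∀ y ∈ s, f y ≤ f p := by
  by_cases hne : (interior s).Nonempty
  · obtain ⟨F, hF⟩ := geometric_hahn_banach_open_point (Convex.interior hs) isOpen_interior hip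
    obtain ⟨a₀, ha₀⟩ := hne
    refine ⟨F.toLinearMap, ?_, ?_⟩
    · intro hzero
      have h1 : F a₀ < F p := hF a₀ ha₀
      have h2 : F a₀ = 0 := by
        have := congrArg (fun f : Pl →ₗ[ℝ] ℝ => f a₀) hzero; simpa using this
      have h3 : F p = 0 := by
        have := congrArg (fun f : Pl →ₗ[ℝ] ℝ => f p) hzero; simpa using this
      rw [h2, h3] at h1; exact lt_irrefl _ h1
    · intro y hy
      simp only [ContinuousLinearMap.coe_coe]
      by_contra hgt
      push_neg at hgt
      have haF : F a₀ < F p := hF a₀ ha₀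
      set t : ℝ := min (1/2) ((F y - F p) / (F y - F a₀)) with ht
      have hden : 0 < F y - F a₀ := by linarith
      have htpos : 0 < t := by
        apply lt_min (by norm_num)
        apply div_pos (by linarith) hden
      have htle : t ≤ (F y - F p) / (F y - F a₀) := min_le_right _ _
      have ht1 : t ≤ 1/2 := min_le_left _ _
      have hmem : (1 - t) • y + t • a₀ ∈ interior s :=
        hs.combo_self_interior_mem_interior hy ha₀ (by linarith) htpos (by ring)
      have hlt : F ((1 - t) • y + t • a₀) < F p := hF _ hmem
      have hval : F ((1 - t) • y + t • a₀) = (1 - t) * F y + t * F a₀ := by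
        rw [map_add, map_smul, map_smul]; simp [smul_eq_mul]
      rw [hval] at hlt
      have : t * (F y - F a₀) ≤ F y - F p := by
        calc t * (F y - F a₀) ≤ ((F y - F p) / (F y - F a₀)) * (F y - F a₀) := by
              apply mul_le_mul_of_nonneg_right htle (le_of_lt hden)
        _ = F y - F p := by field_simp
      linarith
  · have haff : ¬ (affineSpan ℝ s = ⊤) := by
      rw [← Convex.interior_nonempty_iff_affineSpan_eq_top hs]; exact hne
    have hdir : (affineSpan ℝ s).direction ≠ ⊤ := by
      intro htop
      apply haff
      rw [eq_top_iff]
      intro x _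
      have hx : x - p ∈ (affineSpan ℝ s).direction := htop ▸ Submodule.mem_top
      have := AffineSubspace.vadd_mem_of_mem_direction hx (subset_affineSpan ℝ s hp)
      simpa [vadd_eq_add, sub_add_cancel] using this
    by_cases hbot : ∀ y ∈ s, y = p
    · refine ⟨lin 1 0, lin_ne_zero (by simp), fun y hy => by rw [hbot y hy]⟩
    · push_neg at hbot
      obtain ⟨q, hq, hqp⟩ := hbot
      set d : Pl := q - p with hd
      have hdne : d ≠ 0 := sub_ne_zero.2 hqp
      have hdmem : d ∈ (affineSpan ℝ s).direction := by
        have := AffineSubspace.vsub_mem_direction (subset_affineSpan ℝ s hq)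
          (subset_affineSpan ℝ s hp)
        simpa using this
      have hspan : (affineSpan ℝ s).direction ≤ Submodule.span ℝ ({d} : Set Pl) := by
        intro y hy
        by_contra hys
        have h1 : Submodule.span ℝ ({d} : Set Pl) < Submodule.span ℝ ({d, y} : Set Pl) := by
          apply lt_of_le_of_ne (Submodule.span_mono (by simp))
          intro heq
          apply hys
          rw [heq]
          exact Submodule.subset_span (by simp)
        have h2 : Submodule.span ℝ ({d, y} : Set Pl) ≤ (affineSpan ℝ s).direction := by
          rw [Submodule.span_le]
          rintro z (rfl | rfl)
          · exact hdmem
          · exact hy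
        have hr1 : Module.finrank ℝ (Submodule.span ℝ ({d} : Set Pl)) = 1 :=
          finrank_span_singleton hdne
        have hr2 : 1 < Module.finrank ℝ (Submodule.span ℝ ({d, y} : Set Pl)) := by
          rw [← hr1]; exact Submodule.finrank_lt_finrank_of_lt h1
        have hr3 : Module.finrank ℝ ((affineSpan ℝ s).direction) < 2 := by
          have h2d : Module.finrank ℝ Pl = 2 := by simp
          have h4 := Submodule.finrank_lt (s := (affineSpan ℝ s).direction)
            hdir
          rw [h2d] at h4
          exact h4
        have := Submodule.finrank_mono h2
        omega
      refine ⟨rot d, rot_ne_zero hdne, fun y hy => ?_⟩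
      have hmem : y - p ∈ Submodule.span ℝ ({d} : Set Pl) := by
        apply hspan
        have := AffineSubspace.vsub_mem_direction (subset_affineSpan ℝ s hy)
          (subset_affineSpan ℝ s hp)
        simpa using this
      have h0 : rot d (y - p) = 0 := rot_span hmem
      rw [map_sub] at h0
      linarith

/-- A point on a supporting line is not interior. -/
lemma noint {H : Set Pl} (f : Pl →ₗ[ℝ] ℝ) (hf : f ≠ 0) {c : ℝ} {x : Pl} (hx : f x = c)
    (hsupp : ∀ y ∈ H, f y ≤ c) : x ∉ interior H := by
  intro hint
  rw [mem_interior_iff_mem_nhds, Metric.mem_nhds_iff] at hint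
  obtain ⟨ε, hε, hball⟩ := hint
  obtain ⟨v, hv⟩ : ∃ v, f v ≠ 0 := by
    by_contra hall
    push_neg at hall
    exact hf (LinearMap.ext fun y => by rw [hall y]; rfl)
  obtain ⟨w, hw⟩ : ∃ w : Pl, 0 < f w := by
    rcases hv.lt_or_gt with h | h
    · exact ⟨-v, by rw [map_neg]; linarith⟩
    · exact ⟨v, h⟩
  have hwne : w ≠ 0 := by
    intro hc; rw [hc, map_zero] at hw; exact lt_irrefl _ hw
  have hnw : 0 < ‖w‖ := norm_pos_iff.2 hwne
  set t : ℝ := ε / (2 * ‖w‖) with htdef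
  have htpos : 0 < t := div_pos hε (by positivity)
  have hmem : x + t • w ∈ Metric.ball x ε := by
    rw [Metric.mem_ball, dist_eq_norm, add_sub_cancel_left, norm_smul, Real.norm_eq_abs,
      abs_of_pos htpos]
    rw [htdef]
    rw [div_mul_eq_mul_div, mul_comm]
    rw [mul_comm (2 : ℝ) ‖w‖, ← div_div]
    have : ‖w‖ * ε / ‖w‖ = ε := by field_simp
    rw [this]
    linarith
  have hle : f (x + t • w) ≤ c := hsupp _ (hball hmem)
  rw [map_add, map_smul, smul_eq_mul, hx] at hle
  nlinarith

end LinearAlgebra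

section ListLemmas

variable {L : List Pl} {α : ℕ}

lemma mod_succ_mod (m n : ℕ) : (m % n + 1) % n = (m + 1) % n := by
  conv_rhs => rw [Nat.add_mod]
  conv_lhs => rw [Nat.add_mod]
  rw [Nat.mod_mod_of_dvd _ dvd_rfl]

lemma add_mod_mod (a x n : ℕ) : (a + x % n) % n = (a + x) % n := by
  conv_rhs => rw [Nat.add_mod]
  conv_lhs => rw [Nat.add_mod]
  rw [Nat.mod_mod_of_dvd _ dvd_rfl]

lemma vtx_congr {m m' : ℕ} (h : m % L.length = m' % L.length) : vtx L m = vtx L m' := by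
  simp [vtx, h]

lemma vtx_eq_getElem {m : ℕ} (hm : m < L.length) : vtx L m = L[m] := by
  rw [vtx, Nat.mod_eq_of_lt hm, List.getD_eq_getElem _ _ (by omega)]

lemma vtx_mem (hL : L ≠ []) (m : ℕ) : vtx L m ∈ vertexSet L := by
  have h : m % L.length < L.length := Nat.mod_lt _ (List.length_pos_iff.2 hL)
  rw [vtx, List.getD_eq_getElem _ _ h]
  exact List.getElem_mem h

lemma mem_vertexSet_iff {y : Pl} : y ∈ vertexSet L ↔ ∃ k, k < L.length ∧ vtx L k = y := by
  constructor
  · intro hy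
    obtain ⟨k, hk, hky⟩ := List.getElem_of_mem hy
    exact ⟨k, hk, by rw [vtx_eq_getElem hk, hky]⟩
  · rintro ⟨k, hk, rfl⟩
    exact vtx_mem (List.length_pos_iff.1 (by omega)) k

lemma mem_edg_seg (hL : L ≠ []) (m : ℕ) : segment ℝ (vtx L m) (vtx L (m + 1)) ⊆ edg L := by
  intro x hx
  have hlen : 0 < L.length := List.length_pos_iff.2 hL
  have h1 : vtx L m = vtx L (m % L.length) := vtx_congr (by rw [Nat.mod_mod_of_dvd _ dvd_rfl])
  have h2 : vtx L (m + 1) = vtx L (m % L.length + 1) := by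
    apply vtx_congr
    rw [mod_succ_mod]
  rw [edg]
  apply Set.mem_biUnion (Finset.mem_range.2 (Nat.mod_lt _ hlen))
  rw [← h1, ← h2]
  exact hx

lemma vtx_mem_edg (hL : L ≠ []) (m : ℕ) : vtx L m ∈ edg L :=
  mem_edg_seg hL m (left_mem_segment ℝ _ _)

lemma length_erase (hα : α < L.length) : (L.eraseIdx α).length = L.length - 1 := by
  rw [List.length_eraseIdx]; simp [hα]

lemma vertexSet_erase_subset : vertexSet (L.eraseIdx α) ⊆ vertexSet L := by
  intro x hx
  exact List.mem_of_mem_eraseIdx hx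

lemma vtx_erase (hα : α < L.length) {k : ℕ} (hk : k < L.length - 1) :
    vtx (L.eraseIdx α) k = if k < α then vtx L k else vtx L (k + 1) := by
  have hlen := length_erase hα
  have hk' : k < (L.eraseIdx α).length := by omega
  rw [vtx_eq_getElem hk', List.getElem_eraseIdx]
  split
  · rw [vtx_eq_getElem (by omega)]
  · rw [vtx_eq_getElem (by omega)]

lemma vtx_mem_erase (hα : α < L.length) {m : ℕ} (hm : m < L.length) (hne : m ≠ α) :
    vtx L m ∈ vertexSet (L.eraseIdx α) := by
  have h2 : 2 ≤ L.length := by omega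
  have hlen : (L.eraseIdx α).length = L.length - 1 := length_erase hα
  have hne' : L.eraseIdx α ≠ [] := by
    intro hc; rw [hc] at hlen; simp at hlen; omega
  rcases Nat.lt_or_ge m α with hlt | hge
  · have heq : vtx (L.eraseIdx α) m = vtx L m := by
      rw [vtx_erase (k := m) hα (by omega), if_pos hlt]
    rw [← heq]; exact vtx_mem hne' m
  · have hgt : α < m := by omega
    have hb : m - 1 < L.length - 1 := by omega
    have hnlt : ¬ (m - 1 < α) := by omega
    have heq : vtx (L.eraseIdx α) (m - 1) = vtx L m := by
      rw [vtx_erase (k := m - 1) hα hb, if_neg hnlt,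
        show m - 1 + 1 = m by omega]
    rw [← heq]; exact vtx_mem hne' _

lemma erase_ne_nil (hα : α < L.length) (h2 : 2 ≤ L.length) : L.eraseIdx α ≠ [] := by
  have hlen := length_erase hα
  intro hc; rw [hc] at hlen; simp at hlen; omega

lemma vtx_erase_zero (hα : α < L.length) (h2 : 2 ≤ L.length) :
    vtx (L.eraseIdx α) 0 = if 0 < α then vtx L 0 else vtx L 1 := by
  rw [vtx_erase (k := 0) hα (by omega)]

lemma vtx_erase_last (hα : α < L.length) (h2 : 2 ≤ L.length) :
    vtx (L.eraseIdx α) (L.length - 1) = if 0 < α then vtx L 0 else vtx L 1 := by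
  have hlen := length_erase hα
  have heq : vtx (L.eraseIdx α) (L.length - 1) = vtx (L.eraseIdx α) 0 := by
    apply vtx_congr
    rw [hlen, Nat.mod_self, Nat.zero_mod]
  rw [heq, vtx_erase_zero hα h2]

/-- Every edge of the reduced polygon is an edge of `L` or the bridging segment. -/
lemma edg_erase_subset (hα : α < L.length) (h2 : 2 ≤ L.length) :
    edg (L.eraseIdx α) ⊆ edg L ∪ segment ℝ (vtx L (α + L.length - 1)) (vtx L (α + 1)) := by
  intro x hx
  set n := L.length with hn
  have hLne : L ≠ [] := by intro hc; rw [hc] at hn; simp at hn; omega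
  have hlen := length_erase hα
  rw [edg] at hx
  obtain ⟨k, hk, hxk⟩ := by
    simpa only [Set.mem_iUnion, Finset.mem_range, exists_prop] using hx
  rw [hlen] at hk
  have hvk : vtx (L.eraseIdx α) k = if k < α then vtx L k else vtx L (k + 1) :=
    vtx_erase hα hk
  rcases Nat.lt_or_ge (k+1) α with hB | hB
  · left
    have hv1 : vtx (L.eraseIdx α) (k+1) = vtx L (k+1) := by
      rw [vtx_erase (k := k+1) hα (by omega), if_pos hB]
    rw [hvk, if_pos (by omega), hv1] at hxk
    exact mem_edg_seg hLne k hxk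
  rcases Nat.lt_or_ge k α with hC | hC
  · have hkα : k + 1 = α := by omega
    right
    have hve : vtx (L.eraseIdx α) k = vtx L k := by rw [hvk, if_pos hC]
    have hbl : vtx L (α + n - 1) = vtx L k := by
      apply vtx_congr
      have heq : α + n - 1 = k + n := by omega
      rw [heq, Nat.add_mod_right]
    rcases Nat.lt_or_ge (k+1) (n-1) with hD | hD
    · have hv1 : vtx (L.eraseIdx α) (k+1) = vtx L (k+2) := by
        rw [vtx_erase (k := k+1) hα hD, if_neg (by omega)]
      have hbr : vtx L (α + 1) = vtx L (k + 2) := by rw [← hkα]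
      rw [hve, hv1] at hxk
      rw [hbl, hbr]
      exact hxk
    · have hk1 : k + 1 = n - 1 := by omega
      have hα' : α = n - 1 := by omega
      have hv1 : vtx (L.eraseIdx α) (k+1) = vtx L 0 := by
        rw [hk1, vtx_erase_last hα h2, if_pos (by omega)]
      have hbr : vtx L (α + 1) = vtx L 0 := by
        apply vtx_congr
        rw [show α + 1 = n by omega, Nat.mod_self, Nat.zero_mod]
      rw [hve, hv1] at hxk
      rw [hbl, hbr]
      exact hxk
  · have hvk' : vtx (L.eraseIdx α) k = vtx L (k+1) := by rw [hvk, if_neg (by omega)]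
    rcases Nat.lt_or_ge (k+1) (n-1) with hD | hD
    · left
      have hv1 : vtx (L.eraseIdx α) (k+1) = vtx L (k+2) := by
        rw [vtx_erase (k := k+1) hα hD, if_neg (by omega)]
      rw [hvk', hv1] at hxk
      exact mem_edg_seg hLne (k+1) hxk
    · have hk1 : k + 1 = n - 1 := by omega
      rcases Nat.eq_zero_or_pos α with hα0 | hα0
      · right
        have hv1 : vtx (L.eraseIdx α) (k+1) = vtx L 1 := by
          rw [hk1, vtx_erase_last hα h2, if_neg (by omega)]
        have hbl : vtx L (α + n - 1) = vtx L (k+1) := by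
          apply vtx_congr; rw [hα0]; congr 1; omega
        have hbr : vtx L (α + 1) = vtx L 1 := by rw [hα0]
        rw [hvk', hv1] at hxk
        rw [hbl, hbr]
        exact hxk
      · left
        have hv1 : vtx (L.eraseIdx α) (k+1) = vtx L (k+2) := by
          rw [hk1, vtx_erase_last hα h2, if_pos hα0]
          apply vtx_congr
          rw [show k + 2 = n by omega, Nat.mod_self, Nat.zero_mod]
        rw [hvk', hv1] at hxk
        exact mem_edg_seg hLne (k+1) hxk

/-- An edge of `L` avoiding `α` is an edge of the reduced polygon. -/
lemma edge_in_erase (hα : α < L.length) (h3 : 3 ≤ L.length) {i : ℕ} (hi : i < L.length)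
    (h1 : α ≠ i) (h2 : α ≠ (i + 1) % L.length) :
    segment ℝ (vtx L i) (vtx L (i + 1)) ⊆ edg (L.eraseIdx α) := by
  set n := L.length with hn
  have hlen := length_erase hα
  have hne' : L.eraseIdx α ≠ [] := erase_ne_nil hα (by omega)
  rcases Nat.lt_or_ge (i+1) α with hA | hA
  · have hv0 : vtx (L.eraseIdx α) i = vtx L i := by
      rw [vtx_erase (k := i) hα (by omega), if_pos (by omega)]
    have hv1 : vtx (L.eraseIdx α) (i+1) = vtx L (i+1) := by
      rw [vtx_erase (k := i+1) hα (by omega), if_pos hA]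
    rw [← hv0, ← hv1]
    exact mem_edg_seg hne' i
  · rcases Nat.lt_or_ge (i+1) n with hB | hB
    · have hαi : α < i := by
        have heq : (i+1) % n = i + 1 := Nat.mod_eq_of_lt hB
        rw [heq] at h2
        omega
      have hv0 : vtx (L.eraseIdx α) (i-1) = vtx L i := by
        rw [vtx_erase (k := i-1) hα (by omega), if_neg (by omega),
          show i - 1 + 1 = i by omega]
      rcases Nat.lt_or_ge i (n-1) with hC | hC
      · have hv1 : vtx (L.eraseIdx α) i = vtx L (i+1) := by
          rw [vtx_erase (k := i) hα hC, if_neg (by omega)]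
        rw [← hv0, ← hv1]
        have hsub := mem_edg_seg hne' (i-1)
        rw [show i - 1 + 1 = i by omega] at hsub
        exact hsub
      · omega
    · have hin : i = n - 1 := by omega
      have hα0 : 0 < α := by
        rcases Nat.eq_zero_or_pos α with h | h
        · exfalso; apply h2; rw [h, show i + 1 = n by omega, Nat.mod_self]
        · exact h
      have hαi : α < i := by omega
      have hv0 : vtx (L.eraseIdx α) (i-1) = vtx L i := by
        rw [vtx_erase (k := i-1) hα (by omega), if_neg (by omega),
          show i - 1 + 1 = i by omega]
      have hv1 : vtx (L.eraseIdx α) i = vtx L (i+1) := by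
        rw [show i = n - 1 by omega, vtx_erase_last hα (by omega), if_pos hα0]
        apply vtx_congr
        rw [show n - 1 + 1 = n by omega, Nat.mod_self, Nat.zero_mod]
      rw [← hv0, ← hv1]
      have hsub := mem_edg_seg hne' (i-1)
      rw [show i - 1 + 1 = i by omega] at hsub
      exact hsub

end ListLemmas

section IVT

/-- straddling on a line gives segment membership -/
lemma seg_mem (f g : Pl →ₗ[ℝ] ℝ) (hinj : ∀ y z : Pl, f y = f z → g y = g z → y = z)
    {x₁ x₂ p : Pl} {c : ℝ} (h1 : f x₁ = c) (h2 : f x₂ = c) (hp : f p = c)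
    (hg1 : g x₁ ≤ g p) (hg2 : g p ≤ g x₂) : p ∈ segment ℝ x₁ x₂ := by
  rcases le_or_gt (g x₂) (g x₁) with hle | hlt
  · have hpx : p = x₁ := hinj _ _ (by rw [hp, h1]) (le_antisymm (by linarith) hg1)
    rw [hpx]
    exact left_mem_segment ℝ _ _
  · set t : ℝ := (g p - g x₁) / (g x₂ - g x₁) with htdef
    have hden : 0 < g x₂ - g x₁ := by linarith
    have ht0 : 0 ≤ t := div_nonneg (by linarith) (le_of_lt hden)
    have ht1 : t ≤ 1 := by
      rw [htdef, div_le_one hden]; linarith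
    have hq : p = (1 - t) • x₁ + t • x₂ := by
      apply hinj
      · rw [hp, map_add, map_smul, map_smul, smul_eq_mul, smul_eq_mul, h1, h2]; ring
      · rw [map_add, map_smul, map_smul, smul_eq_mul, smul_eq_mul]
        rw [htdef]
        field_simp
        ring
    rw [hq]
    exact ⟨1 - t, t, by linarith, ht0, by ring, rfl⟩

lemma ivt {L : List Pl} (hL : L ≠ []) (f g : Pl →ₗ[ℝ] ℝ)
    (hinj : ∀ y z : Pl, f y = f z → g y = g z → y = z) {c : ℝ} {p : Pl} (hp : f p = c) :
    ∀ (k u : ℕ), (∀ m, u ≤ m → m ≤ u + k → f (vtx L m) = c) →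
      g (vtx L u) ≤ g p → g p ≤ g (vtx L (u + k)) → p ∈ edg L := by
  intro k
  induction k with
  | zero =>
    intro u hline hg1 hg2
    have hgp : g p = g (vtx L u) := le_antisymm (by simpa using hg2) hg1
    have hpu : p = vtx L u := hinj _ _ (by rw [hp, hline u le_rfl (by omega)]) hgp
    rw [hpu]
    exact vtx_mem_edg hL u
  | succ k ih =>
    intro u hline hg1 hg2
    rcases le_or_gt (g p) (g (vtx L (u+1))) with hc | hc
    · exact mem_edg_seg hL u
        (seg_mem f g hinj (hline u le_rfl (by omega)) (hline (u+1) (by omega) (by omega))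
          hp hg1 hc)
    · apply ih (u+1) (fun m hm1 hm2 => hline m (by omega) (by omega)) hc.le
      rw [show u + 1 + k = u + (k + 1) by omega]
      exact hg2

end IVT

/-! ### Part I: quasi-convexity -/

lemma quasi (L : List Pl) (hn : 5 ≤ L.length)
    (h : ∀ α : ℕ, α < L.length → IsConvexPolygon (L.eraseIdx α)) :
    edg L ⊆ frontier (convexHull ℝ (vertexSet L)) := by
  classical
  set n := L.length with hnn
  have hLne : L ≠ [] := by intro hc; rw [hc] at hnn; simp at hnn; omega
  have hfin : (vertexSet L).Finite := L.finite_toSet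
  have hclosed : IsClosed (convexHull ℝ (vertexSet L)) := hfin.isClosed_convexHull ℝ
  set H := convexHull ℝ (vertexSet L) with hH
  -- step 1 : nondegenerate edges lie in the frontier
  have step1 : ∀ i, i < n → vtx L i ≠ vtx L (i+1) →
      segment ℝ (vtx L i) (vtx L (i+1)) ⊆ frontier H := by
    intro i hi hnedeg
    set d : Pl := vtx L (i+1) - vtx L i with hd
    have hdne : d ≠ 0 := sub_ne_zero.2 (Ne.symm hnedeg)
    set c : ℝ := rot d (vtx L i) with hc
    have hc1 : rot d (vtx L (i+1)) = c := by
      have h0 : rot d d = 0 := rot_self d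
      rw [hd, map_sub] at h0
      rw [hc]; linarith
    -- three distinct admissible removal indices
    set s : Finset ℕ := (Finset.range n) \ {i, (i+1) % n} with hs
    have hscard : 3 ≤ s.card := by
      have h1 : ({i, (i+1) % n} : Finset ℕ).card ≤ 2 := by
        apply le_trans (Finset.card_insert_le _ _); simp
      have h2 := Finset.le_card_sdiff ({i, (i+1) % n} : Finset ℕ) (Finset.range n)
      rw [Finset.card_range] at h2
      rw [← hs] at h2
      generalize hgen : ({i, (i+1) % n} : Finset ℕ).card = c2 at h1 h2
      omega
    obtain ⟨α, hαs⟩ := Finset.card_pos.1 (show 0 < s.card by omega)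
    obtain ⟨β, hβs, hβα⟩ := Finset.exists_mem_ne (show 1 < s.card by omega) α
    have hscard2 : 1 ≤ ((s.erase α).erase β).card := by
      have e1 : (s.erase α).card = s.card - 1 := Finset.card_erase_of_mem hαs
      have hβ' : β ∈ s.erase α := Finset.mem_erase.2 ⟨hβα, hβs⟩
      have e2 : ((s.erase α).erase β).card = (s.erase α).card - 1 :=
        Finset.card_erase_of_mem hβ'
      omega
    obtain ⟨γ, hγs'⟩ := Finset.card_pos.1 (show 0 < ((s.erase α).erase β).card by omega)
    have hγβ : γ ≠ β := (Finset.mem_erase.1 hγs').1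
    have hγα : γ ≠ α := (Finset.mem_erase.1 (Finset.mem_erase.1 hγs').2).1
    have hγs : γ ∈ s := (Finset.mem_erase.1 (Finset.mem_erase.1 hγs').2).2
    have hmem : ∀ δ ∈ s, δ < n ∧ δ ≠ i ∧ δ ≠ (i+1) % n := by
      intro δ hδ
      rw [hs, Finset.mem_sdiff, Finset.mem_range] at hδ
      refine ⟨hδ.1, ?_, ?_⟩
      · intro hc'; exact hδ.2 (by simp [hc'])
      · intro hc'; exact hδ.2 (by simp [hc'])
    -- each admissible δ gives a one-sided bound
    have hUD : ∀ δ ∈ s,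
        (∀ k, k < n → k ≠ δ → rot d (vtx L k) ≤ c) ∨
        (∀ k, k < n → k ≠ δ → c ≤ rot d (vtx L k)) := by
      intro δ hδ
      obtain ⟨hδn, hδi, hδi1⟩ := hmem δ hδ
      have hconv := h δ hδn
      have hfin' : (vertexSet (L.eraseIdx δ)).Finite := (L.eraseIdx δ).finite_toSet
      have hclosed' : IsClosed (convexHull ℝ (vertexSet (L.eraseIdx δ))) :=
        hfin'.isClosed_convexHull ℝ
      set x₀ : Pl := (1/2 : ℝ) • vtx L i + (1/2 : ℝ) • vtx L (i+1) with hx₀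
      have hx₀seg : x₀ ∈ segment ℝ (vtx L i) (vtx L (i+1)) :=
        ⟨1/2, 1/2, by norm_num, by norm_num, by norm_num, rfl⟩
      have hx₀f : x₀ ∈ frontier (convexHull ℝ (vertexSet (L.eraseIdx δ))) := by
        rw [← hconv]
        exact edge_in_erase hδn (by omega) hi hδi hδi1 hx₀seg
      rw [hclosed'.frontier_eq] at hx₀f
      obtain ⟨f, hfne, hfsupp⟩ := supp (convex_convexHull ℝ _) hx₀f.1 hx₀f.2
      have hWi : vtx L i ∈ convexHull ℝ (vertexSet (L.eraseIdx δ)) :=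
        subset_convexHull ℝ _ (vtx_mem_erase hδn hi (Ne.symm hδi))
      have hWi1 : vtx L (i+1) ∈ convexHull ℝ (vertexSet (L.eraseIdx δ)) := by
        have hcongr : vtx L (i+1) = vtx L ((i+1) % n) :=
          vtx_congr (by rw [Nat.mod_mod_of_dvd _ dvd_rfl])
        rw [hcongr]
        exact subset_convexHull ℝ _
          (vtx_mem_erase hδn (Nat.mod_lt _ (by omega)) (Ne.symm hδi1))
      have hfi : f (vtx L i) ≤ f x₀ := hfsupp _ hWi
      have hfi1 : f (vtx L (i+1)) ≤ f x₀ := hfsupp _ hWi1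
      have hfx₀ : f x₀ = (1/2 : ℝ) * f (vtx L i) + (1/2 : ℝ) * f (vtx L (i+1)) := by
        rw [hx₀, map_add, map_smul, map_smul]; simp [smul_eq_mul]
      have heqi : f (vtx L i) = f x₀ := by linarith
      have heqi1 : f (vtx L (i+1)) = f x₀ := by linarith
      have hfd : f d = 0 := by rw [hd, map_sub, heqi, heqi1]; ring
      obtain ⟨lam, hlam⟩ := prop_rot hdne f hfd
      have hlamne : lam ≠ 0 := by
        intro hc'
        apply hfne
        apply LinearMap.ext
        intro y
        rw [hlam y, hc']
        simp
      rcases hlamne.lt_or_gt with hneg | hpos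
      · right
        intro k hk hkδ
        have hWk : vtx L k ∈ convexHull ℝ (vertexSet (L.eraseIdx δ)) :=
          subset_convexHull ℝ _ (vtx_mem_erase hδn hk hkδ)
        have := hfsupp _ hWk
        rw [hlam (vtx L k), ← heqi, hlam (vtx L i), ← hc] at this
        by_contra hxc
        push_neg at hxc
        have hlt := mul_lt_mul_of_neg_left hxc hneg
        linarith
      · left
        intro k hk hkδ
        have hWk : vtx L k ∈ convexHull ℝ (vertexSet (L.eraseIdx δ)) :=
          subset_convexHull ℝ _ (vtx_mem_erase hδn hk hkδ)
        have := hfsupp _ hWk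
        rw [hlam (vtx L k), ← heqi, hlam (vtx L i), ← hc] at this
        exact le_of_mul_le_mul_left this hpos
    -- pigeonhole among the three indices
    have hcombP : ∀ δ₁ δ₂ : ℕ, δ₁ ≠ δ₂ →
        (∀ k, k < n → k ≠ δ₁ → rot d (vtx L k) ≤ c) →
        (∀ k, k < n → k ≠ δ₂ → rot d (vtx L k) ≤ c) →
        ∀ k, k < n → rot d (vtx L k) ≤ c := by
      intro δ₁ δ₂ hne12 hP1 hP2 k hk
      by_cases hkδ : k = δ₁
      · exact hP2 k hk (by rw [hkδ]; exact hne12)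
      · exact hP1 k hk hkδ
    have hcombN : ∀ δ₁ δ₂ : ℕ, δ₁ ≠ δ₂ →
        (∀ k, k < n → k ≠ δ₁ → c ≤ rot d (vtx L k)) →
        (∀ k, k < n → k ≠ δ₂ → c ≤ rot d (vtx L k)) →
        ∀ k, k < n → c ≤ rot d (vtx L k) := by
      intro δ₁ δ₂ hne12 hP1 hP2 k hk
      by_cases hkδ : k = δ₁
      · exact hP2 k hk (by rw [hkδ]; exact hne12)
      · exact hP1 k hk hkδ
    have hglobal : (∀ k, k < n → rot d (vtx L k) ≤ c) ∨
        (∀ k, k < n → c ≤ rot d (vtx L k)) := by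
      rcases hUD α hαs with hA | hA <;> rcases hUD β hβs with hB | hB <;>
        rcases hUD γ hγs with hC | hC
      · exact Or.inl (hcombP α β (Ne.symm hβα) hA hB)
      · exact Or.inl (hcombP α β (Ne.symm hβα) hA hB)
      · exact Or.inl (hcombP α γ (Ne.symm hγα) hA hC)
      · exact Or.inr (hcombN β γ (Ne.symm hγβ) hB hC)
      · exact Or.inl (hcombP β γ (Ne.symm hγβ) hB hC)
      · exact Or.inr (hcombN α γ (Ne.symm hγα) hA hC)
      · exact Or.inr (hcombN α β (Ne.symm hβα) hA hB)
      · exact Or.inr (hcombN α β (Ne.symm hβα) hA hB)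
    intro x hx
    have hxc : rot d x = c := by
      obtain ⟨a2, b2, ha2, hb2, hab2, rfl⟩ := hx
      rw [map_add, map_smul, map_smul, smul_eq_mul, smul_eq_mul, hc1, ← hc]
      have : a2 * c + b2 * c = (a2 + b2) * c := by ring
      rw [this, hab2, one_mul]
    have hxH : x ∈ H := by
      apply Convex.segment_subset (convex_convexHull ℝ _)
        (subset_convexHull ℝ _ (vtx_mem hLne i))
        (subset_convexHull ℝ _ (vtx_mem hLne (i+1))) hx
    rw [hclosed.frontier_eq]
    refine ⟨hxH, ?_⟩
    rcases hglobal with hg | hg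
    · have hsup : ∀ y ∈ H, rot d y ≤ c := by
        rw [hH]
        intro y hy
        have hsub : vertexSet L ⊆ {y : Pl | rot d y ≤ c} := by
          intro z hz
          obtain ⟨k, hk, rfl⟩ := mem_vertexSet_iff.1 hz
          exact hg k hk
        exact convexHull_min hsub (convex_halfSpace_le (LinearMap.isLinear _) c) hy
      exact noint (rot d) (rot_ne_zero hdne) hxc hsup
    · have hsup : ∀ y ∈ H, c ≤ rot d y := by
        rw [hH]
        intro y hy
        have hsub : vertexSet L ⊆ {y : Pl | c ≤ rot d y} := by
          intro z hz
          obtain ⟨k, hk, rfl⟩ := mem_vertexSet_iff.1 hz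
          exact hg k hk
        exact convexHull_min hsub (convex_halfSpace_ge (LinearMap.isLinear _) c) hy
      have hxc' : (-(rot d)) x = -c := by rw [LinearMap.neg_apply, hxc]
      have hsup' : ∀ y ∈ H, (-(rot d)) y ≤ -c := by
        intro y hy
        rw [LinearMap.neg_apply]
        linarith [hsup y hy]
      exact noint (-(rot d)) (neg_ne_zero.2 (rot_ne_zero hdne)) hxc' hsup'
  -- step 2 : every vertex lies in the frontier
  have step2 : ∀ m, m < n → vtx L m ∈ frontier H := by
    intro m hm
    have hmH : vtx L m ∈ H := subset_convexHull ℝ _ (vtx_mem hLne m)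
    by_cases hconst : ∀ k, k < n → vtx L k = vtx L m
    · rw [hclosed.frontier_eq]
      refine ⟨hmH, ?_⟩
      have hsup : ∀ y ∈ H, lin 1 0 y ≤ lin 1 0 (vtx L m) := by
        rw [hH]
        intro y hy
        have hsub : vertexSet L ⊆ {y : Pl | lin 1 0 y ≤ lin 1 0 (vtx L m)} := by
          intro z hz
          obtain ⟨k, hk, rfl⟩ := mem_vertexSet_iff.1 hz
          show lin 1 0 (vtx L k) ≤ lin 1 0 (vtx L m)
          rw [hconst k hk]
        exact convexHull_min hsub (convex_halfSpace_le (LinearMap.isLinear _) _) hy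
      exact noint (lin 1 0) (lin_ne_zero (by simp)) rfl hsup
    · push_neg at hconst
      obtain ⟨k, hk, hkm⟩ := hconst
      have hkmne : k ≠ m := by intro hc'; rw [hc'] at hkm; exact hkm rfl
      have hexP : ∃ t, 0 < t ∧ vtx L (m + t) ≠ vtx L m := by
        refine ⟨k + n - m, by omega, ?_⟩
        have heq : vtx L (m + (k + n - m)) = vtx L k := by
          apply vtx_congr
          rw [show m + (k + n - m) = k + n by omega, Nat.add_mod_right]
        rw [heq]
        exact hkm
      set t₀ := Nat.find hexP with ht₀
      have hspec := Nat.find_spec hexP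
      have ht₀pos : 0 < t₀ := hspec.1
      set j := m + t₀ - 1 with hj
      have hjm : vtx L j = vtx L m := by
        rcases Nat.eq_or_lt_of_le ht₀pos with h1 | h1
        · rw [hj, ← h1]
          simp
        · have hmin := Nat.find_min hexP (m := t₀ - 1) (by omega)
          push_neg at hmin
          have := hmin (by omega)
          rw [hj, show m + t₀ - 1 = m + (t₀ - 1) by omega]
          exact this
      have hjne : vtx L j ≠ vtx L (j + 1) := by
        rw [hjm, show j + 1 = m + t₀ by omega]
        exact fun hc' => hspec.2 hc'.symm
      have hjmod : vtx L (j % n) = vtx L j := vtx_congr (by rw [Nat.mod_mod_of_dvd _ dvd_rfl])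
      have hjmod1 : vtx L (j % n + 1) = vtx L (j + 1) := vtx_congr (by rw [mod_succ_mod])
      have hfr := step1 (j % n) (Nat.mod_lt _ (by omega))
        (by rw [hjmod, hjmod1]; exact hjne)
      have : vtx L m ∈ segment ℝ (vtx L (j % n)) (vtx L (j % n + 1)) := by
        rw [hjmod, hjm]
        exact left_mem_segment ℝ _ _
      exact hfr this
  -- assemble
  intro x hx
  rw [edg] at hx
  obtain ⟨i, hi, hxi⟩ := by
    simpa only [Set.mem_iUnion, Finset.mem_range, exists_prop] using hx
  by_cases hdeg : vtx L i = vtx L (i+1)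
  · rw [hdeg, segment_same] at hxi
    rw [hxi, ← vtx_congr (m := (i+1) % n) (m' := i + 1) (by rw [Nat.mod_mod_of_dvd _ dvd_rfl])]
    exact step2 ((i+1) % n) (Nat.mod_lt _ (by omega))
  · exact step1 i hi hdeg hxi

/-! ### Part II: the frontier is covered by the edges -/

lemma main2 (L : List Pl) (hn : 5 ≤ L.length)
    (h : ∀ α : ℕ, α < L.length → IsConvexPolygon (L.eraseIdx α)) :
    frontier (convexHull ℝ (vertexSet L)) ⊆ edg L := by
  classical
  set n := L.length with hnn
  have hLne : L ≠ [] := by intro hc; rw [hc] at hnn; simp at hnn; omega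
  have hfin : (vertexSet L).Finite := L.finite_toSet
  set H := convexHull ℝ (vertexSet L) with hH
  have hclosed : IsClosed H := hfin.isClosed_convexHull ℝ
  intro p hp
  rw [hclosed.frontier_eq] at hp
  obtain ⟨hpH, hpint⟩ := hp
  obtain ⟨f, hfne, hsupp⟩ := supp (convex_convexHull ℝ _) hpH hpint
  set c := f p with hcdef
  set A := f (EuclideanSpace.single 0 1) with hA
  set B := f (EuclideanSpace.single 1 1) with hB
  have hAB : ¬ (A = 0 ∧ B = 0) := by
    rintro ⟨hA0, hB0⟩
    apply hfne
    apply LinearMap.ext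
    intro y
    have hy := lin_repr f y
    rw [← hA, ← hB, hA0, hB0] at hy
    simpa using hy
  set g : Pl →ₗ[ℝ] ℝ := lin (-B) A with hg
  have hfeq : ∀ y, f y = lin A B y := by
    intro y
    have hy := lin_repr f y
    rw [← hA, ← hB] at hy
    rw [lin_apply]
    exact hy
  have hinj : ∀ y z : Pl, f y = f z → g y = g z → y = z := by
    intro y z h1 h2
    rw [hfeq y, hfeq z] at h1
    exact lin_pair_inj hAB h1 h2
  -- hull representation
  set t : Finset Pl := L.toFinset with ht
  have hVt : vertexSet L = (↑t : Set Pl) := by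
    ext y; simp [vertexSet, ht, List.mem_toFinset]
  have hpH' : p ∈ convexHull ℝ (↑t : Set Pl) := by rw [← hVt]; exact hpH
  rw [Finset.convexHull_eq] at hpH'
  obtain ⟨w, hw0, hw1, hwc⟩ := hpH'
  have hpsum : p = ∑ y ∈ t, w y • y := by
    rw [← hwc, Finset.centerMass_eq_of_sum_1 _ _ hw1]
    simp
  have hfy : ∀ y ∈ t, f y ≤ c := fun y hy =>
    hsupp y (subset_convexHull ℝ _ (by rw [hVt]; exact hy))
  have hfp1 : f p = ∑ y ∈ t, w y * f y := by
    conv_lhs => rw [hpsum]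
    rw [map_sum]
    apply Finset.sum_congr rfl
    intro y _
    rw [map_smul, smul_eq_mul]
  have hgp : g p = ∑ y ∈ t, w y * g y := by
    conv_lhs => rw [hpsum]
    rw [map_sum]
    apply Finset.sum_congr rfl
    intro y _
    rw [map_smul, smul_eq_mul]
  have hsum0 : ∑ y ∈ t, w y * (c - f y) = 0 := by
    have hexp : ∑ y ∈ t, w y * (c - f y) =
        (∑ y ∈ t, w y) * c - ∑ y ∈ t, w y * f y := by
      rw [Finset.sum_mul, ← Finset.sum_sub_distrib]
      apply Finset.sum_congr rfl
      intro y _; ring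
    rw [hexp, hw1, one_mul, ← hfp1, hcdef]
    exact sub_self _
  have hwline : ∀ y ∈ t, w y ≠ 0 → f y = c := by
    intro y hy hwy
    have hz := (Finset.sum_eq_zero_iff_of_nonneg
      (fun y hy => mul_nonneg (hw0 y hy) (by linarith [hfy y hy]))).1 hsum0 y hy
    rcases mul_eq_zero.1 hz with h' | h'
    · exact absurd h' hwy
    · linarith
  set t' : Finset Pl := t.filter (fun y => f y = c) with ht'
  have ht'ne : t'.Nonempty := by
    obtain ⟨y, hy, hwy⟩ : ∃ y ∈ t, w y ≠ 0 := by
      by_contra hc'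
      push_neg at hc'
      rw [Finset.sum_eq_zero (fun y hy => hc' y hy)] at hw1
      norm_num at hw1
    exact ⟨y, Finset.mem_filter.2 ⟨hy, hwline y hy hwy⟩⟩
  obtain ⟨A₀, hA₀t', hA₀min⟩ := Finset.exists_min_image t' g ht'ne
  obtain ⟨B₀, hB₀t', hB₀max⟩ := Finset.exists_max_image t' g ht'ne
  have hfA₀ : f A₀ = c := (Finset.mem_filter.1 hA₀t').2
  have hfB₀ : f B₀ = c := (Finset.mem_filter.1 hB₀t').2
  have hgA : g A₀ ≤ g p := by
    have hsum : ∑ y ∈ t, w y * (g y - g A₀) = g p - g A₀ := by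
      have hexp : ∑ y ∈ t, w y * (g y - g A₀) =
          (∑ y ∈ t, w y * g y) - (∑ y ∈ t, w y) * g A₀ := by
        rw [Finset.sum_mul, ← Finset.sum_sub_distrib]
        apply Finset.sum_congr rfl
        intro y _; ring
      rw [hexp, hw1, one_mul, ← hgp]
    have hnn : 0 ≤ ∑ y ∈ t, w y * (g y - g A₀) := by
      apply Finset.sum_nonneg
      intro y hy
      by_cases hwy : w y = 0
      · rw [hwy]; simp
      · exact mul_nonneg (hw0 y hy)
          (sub_nonneg.2 (hA₀min y (Finset.mem_filter.2 ⟨hy, hwline y hy hwy⟩)))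
    rw [hsum] at hnn
    linarith
  have hgB : g p ≤ g B₀ := by
    have hsum : ∑ y ∈ t, w y * (g B₀ - g y) = g B₀ - g p := by
      have hexp : ∑ y ∈ t, w y * (g B₀ - g y) =
          (∑ y ∈ t, w y) * g B₀ - (∑ y ∈ t, w y * g y) := by
        rw [Finset.sum_mul, ← Finset.sum_sub_distrib]
        apply Finset.sum_congr rfl
        intro y _; ring
      rw [hexp, hw1, one_mul, ← hgp]
    have hnn : 0 ≤ ∑ y ∈ t, w y * (g B₀ - g y) := by
      apply Finset.sum_nonneg
      intro y hy
      by_cases hwy : w y = 0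
      · rw [hwy]; simp
      · exact mul_nonneg (hw0 y hy)
          (sub_nonneg.2 (hB₀max y (Finset.mem_filter.2 ⟨hy, hwline y hy hwy⟩)))
    rw [hsum] at hnn
    linarith
  have hpseg : p ∈ segment ℝ A₀ B₀ := seg_mem f g hinj hfA₀ hfB₀ hcdef.symm hgA hgB
  obtain ⟨a, ha, haA⟩ := mem_vertexSet_iff.1
    (show A₀ ∈ vertexSet L by rw [hVt]; exact (Finset.mem_filter.1 hA₀t').1)
  obtain ⟨b, hb, hbB⟩ := mem_vertexSet_iff.1
    (show B₀ ∈ vertexSet L by rw [hVt]; exact (Finset.mem_filter.1 hB₀t').1)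
  by_cases hABeq : A₀ = B₀
  · have hpA : p = A₀ := by
      rw [hABeq] at hpseg
      rw [segment_same] at hpseg
      rw [hABeq]
      exact hpseg
    rw [hpA, ← haA]
    exact vtx_mem_edg hLne a
  by_contra hpedg
  have habne : a ≠ b := by intro hc'; apply hABeq; rw [← haA, ← hbB, hc']
  -- the bridge argument
  have hbridge : ∀ α, α < n → α ≠ a → α ≠ b →
      f (vtx L (α + n - 1)) = c ∧ f (vtx L (α + 1)) = c := by
    intro α hα hαa hαb
    have hWa : vtx L a ∈ vertexSet (L.eraseIdx α) :=
      vtx_mem_erase hα ha (fun h' => hαa h'.symm)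
    have hWb : vtx L b ∈ vertexSet (L.eraseIdx α) :=
      vtx_mem_erase hα hb (fun h' => hαb h'.symm)
    have hpHα : p ∈ convexHull ℝ (vertexSet (L.eraseIdx α)) := by
      apply Convex.segment_subset (convex_convexHull ℝ _)
        (subset_convexHull ℝ _ (haA ▸ hWa)) (subset_convexHull ℝ _ (hbB ▸ hWb)) hpseg
    have hpintα : p ∉ interior (convexHull ℝ (vertexSet (L.eraseIdx α))) := by
      intro hc'
      exact hpint (interior_mono (convexHull_mono vertexSet_erase_subset) hc')
    have hfin' : (vertexSet (L.eraseIdx α)).Finite := (L.eraseIdx α).finite_toSet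
    have hclosed' : IsClosed (convexHull ℝ (vertexSet (L.eraseIdx α))) :=
      hfin'.isClosed_convexHull ℝ
    have hpfr : p ∈ edg (L.eraseIdx α) := by
      rw [h α hα, hclosed'.frontier_eq]
      exact ⟨hpHα, hpintα⟩
    have hpbr : p ∈ segment ℝ (vtx L (α + n - 1)) (vtx L (α + 1)) := by
      rcases edg_erase_subset hα (by omega) hpfr with h' | h'
      · exact absurd h' hpedg
      · exact h'
    obtain ⟨u₁, u₂, hu₁, hu₂, husum, hueq⟩ := hpbr
    have hfU : f (vtx L (α + n - 1)) ≤ c :=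
      hsupp _ (subset_convexHull ℝ _ (vtx_mem hLne _))
    have hfV : f (vtx L (α + 1)) ≤ c :=
      hsupp _ (subset_convexHull ℝ _ (vtx_mem hLne _))
    have hfp' : u₁ * f (vtx L (α + n - 1)) + u₂ * f (vtx L (α + 1)) = c := by
      have hcc := congrArg f hueq
      rw [map_add, map_smul, map_smul, smul_eq_mul, smul_eq_mul] at hcc
      rw [hcc, ← hcdef]
    have hu₁ne : u₁ ≠ 0 := by
      intro h0
      apply hpedg
      have hp2 : p = vtx L (α + 1) := by
        rw [← hueq, h0, zero_smul, zero_add, show u₂ = 1 by linarith, one_smul]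
      rw [hp2]
      exact vtx_mem_edg hLne _
    have hu₂ne : u₂ ≠ 0 := by
      intro h0
      apply hpedg
      have hp2 : p = vtx L (α + n - 1) := by
        rw [← hueq, h0, zero_smul, add_zero, show u₁ = 1 by linarith, one_smul]
      rw [hp2]
      exact vtx_mem_edg hLne _
    have e : u₁ * (c - f (vtx L (α + n - 1))) + u₂ * (c - f (vtx L (α + 1))) = 0 := by
      linear_combination c * husum - hfp'
    have hx1 := mul_nonneg hu₁ (sub_nonneg.2 hfU)
    have hx2 := mul_nonneg hu₂ (sub_nonneg.2 hfV)
    have e₁ : u₁ * (c - f (vtx L (α + n - 1))) = 0 := by linarith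
    have e₂ : u₂ * (c - f (vtx L (α + 1))) = 0 := by linarith
    constructor
    · rcases mul_eq_zero.1 e₁ with h' | h'
      · exact absurd h' hu₁ne
      · linarith
    · rcases mul_eq_zero.1 e₂ with h' | h'
      · exact absurd h' hu₂ne
      · linarith
  -- every vertex is on the line, except possibly a single exceptional one
  have honline : ∀ m, m < n → f (vtx L m) = c ∨
      (((m+1) % n = a ∨ (m+1) % n = b) ∧
        ((m + n - 1) % n = a ∨ (m + n - 1) % n = b)) := by
    intro m hm
    by_cases h1' : (m+1) % n = a ∨ (m+1) % n = b
    · by_cases h2' : (m + n - 1) % n = a ∨ (m + n - 1) % n = b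
      · exact Or.inr ⟨h1', h2'⟩
      · push_neg at h2'
        left
        set α := (m + n - 1) % n with hα
        have hαlt : α < n := Nat.mod_lt _ (by omega)
        have hbr := (hbridge α hαlt h2'.1 h2'.2).2
        have hcongr : vtx L (α + 1) = vtx L m := by
          apply vtx_congr
          rw [hα, mod_succ_mod, show m + n - 1 + 1 = m + n by omega, Nat.add_mod_right]
        rw [hcongr] at hbr
        exact hbr
    · push_neg at h1'
      left
      set α := (m+1) % n with hα
      have hαlt : α < n := Nat.mod_lt _ (by omega)
      have hbr := (hbridge α hαlt h1'.1 h1'.2).1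
      have hcongr : vtx L (α + n - 1) = vtx L m := by
        apply vtx_congr
        rw [hα, show (m+1) % n + n - 1 = (m+1) % n + (n-1) by omega,
          Nat.add_mod ((m+1) % n) (n-1) n, Nat.mod_mod_of_dvd _ dvd_rfl, ← Nat.add_mod,
          show m + 1 + (n-1) = m + n by omega, Nat.add_mod_right]
      rw [hcongr] at hbr
      exact hbr
  have hner2 : ∀ m' : ℕ, (m'+1) % n ≠ (m' + n - 1) % n := by
    intro m' heq
    have hmod := (Nat.modEq_iff_dvd' (show m'+1 ≤ m'+n-1 by omega)).1 heq
    have := Nat.le_of_dvd (show 0 < m'+n-1 - (m'+1) by omega) hmod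
    omega
  by_cases hall : ∀ m, m < n → f (vtx L m) = c
  · -- all vertices on the line
    apply hpedg
    have hline : ∀ m, a ≤ m → m ≤ a + (b + n - a) % n → f (vtx L m) = c := by
      intro m _ _
      have hcongr : vtx L m = vtx L (m % n) := by
        apply vtx_congr
        rw [← hnn, Nat.mod_mod_of_dvd _ dvd_rfl]
      rw [hcongr]
      exact hall (m % n) (Nat.mod_lt _ (by omega))
    have hend : vtx L (a + (b + n - a) % n) = vtx L b := by
      apply vtx_congr
      rw [← hnn, add_mod_mod, show a + (b + n - a) = b + n by omega, Nat.add_mod_right]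
    exact ivt hLne f g hinj hcdef.symm ((b + n - a) % n) a hline
      (by rw [haA]; exact hgA) (by rw [hend, hbB]; exact hgB)
  · -- one exceptional vertex m₀
    push_neg at hall
    obtain ⟨m₀, hm₀, hfm₀⟩ := hall
    rcases honline m₀ hm₀ with h' | ⟨hx1, hx2⟩
    · exact absurd h' hfm₀
    have hner : (m₀+1) % n ≠ (m₀ + n - 1) % n := hner2 m₀
    have huniq : ∀ m, m < n → m ≠ m₀ → f (vtx L m) = c := by
      intro m hm hne
      rcases honline m hm with h' | ⟨h1', h2'⟩
      · exact h'
      exfalso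
      have hcase : (m+1) % n = (m₀+1) % n ∨
          ((m+1) % n = (m₀ + n - 1) % n ∧ (m + n - 1) % n = (m₀+1) % n) := by
        rcases h1' with h1a | h1b <;> rcases hx1 with hxa | hxb
        · left; rw [h1a, hxa]
        · right
          constructor
          · rw [h1a]
            rcases hx2 with h2a | h2b
            · rw [h2a]
            · exact absurd (hxb.trans h2b.symm) hner
          · rw [hxb]
            rcases h2' with h2a | h2b
            · exact absurd (h1a.trans h2a.symm) (hner2 m)
            · rw [h2b]
        · right
          constructor
          · rw [h1b]
            rcases hx2 with h2a | h2b
            · exact absurd (hxa.trans h2a.symm) hner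
            · rw [h2b]
          · rw [hxa]
            rcases h2' with h2a | h2b
            · rw [h2a]
            · exact absurd (h1b.trans h2b.symm) (hner2 m)
        · left; rw [h1b, hxb]
      rcases hcase with meq | ⟨e1, e2⟩
      · have hmm : m ≡ m₀ [MOD n] := Nat.ModEq.add_right_cancel' 1 meq
        rw [Nat.ModEq, Nat.mod_eq_of_lt hm, Nat.mod_eq_of_lt hm₀] at hmm
        exact hne hmm
      · have e1' : (m+2) % n = m₀ % n := by
          have hstep : (m+1+1) % n = (m₀+n-1+1) % n := by
            rw [← mod_succ_mod (m+1) n, e1, mod_succ_mod]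
          rw [show m₀+n-1+1 = m₀ + n by omega, Nat.add_mod_right] at hstep
          rw [show m+2 = m+1+1 by omega]
          exact hstep
        have e2' : m % n = (m₀+2) % n := by
          have hstep : (m+n-1+1) % n = (m₀+1+1) % n := by
            rw [← mod_succ_mod (m+n-1) n, e2, mod_succ_mod]
          rw [show m+n-1+1 = m + n by omega, Nat.add_mod_right] at hstep
          rw [show m₀+2 = m₀+1+1 by omega]
          exact hstep
        have e3 : (m+2) % n = (m₀+2+2) % n := Nat.ModEq.add_right 2 e2'
        have e4 : m₀ % n = (m₀+4) % n := by
          calc m₀ % n = (m+2) % n := e1'.symm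
          _ = (m₀+4) % n := by rw [show m₀+4 = m₀+2+2 by omega]; exact e3
        have hdvd := (Nat.modEq_iff_dvd' (show m₀ ≤ m₀+4 by omega)).1 e4
        have := Nat.le_of_dvd (by omega) hdvd
        omega
    have hends : ((m₀+1) % n = a ∧ (m₀+n-1) % n = b) ∨
        ((m₀+1) % n = b ∧ (m₀+n-1) % n = a) := by
      rcases hx1 with h1 | h1 <;> rcases hx2 with h2 | h2
      · exact absurd (h1.trans h2.symm) hner
      · exact Or.inl ⟨h1, h2⟩
      · exact Or.inr ⟨h1, h2⟩
      · exact absurd (h1.trans h2.symm) hner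
    apply hpedg
    have hline : ∀ m, m₀ + 1 ≤ m → m ≤ m₀ + 1 + (n - 2) → f (vtx L m) = c := by
      intro m hm1 hm2
      have hmod : m % n ≠ m₀ := by
        intro heq
        have hmm : m₀ % n = m % n := by rw [heq, Nat.mod_eq_of_lt hm₀]
        have hdvd := (Nat.modEq_iff_dvd' (show m₀ ≤ m by omega)).1 hmm
        have := Nat.le_of_dvd (show 0 < m - m₀ by omega) hdvd
        omega
      have hcongr : vtx L m = vtx L (m % n) := by
        apply vtx_congr
        rw [← hnn, Nat.mod_mod_of_dvd _ dvd_rfl]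
      rw [hcongr]
      exact huniq (m % n) (Nat.mod_lt _ (by omega)) hmod
    have hu' : vtx L (m₀ + 1) = vtx L ((m₀+1) % n) := by
      apply vtx_congr
      rw [← hnn, Nat.mod_mod_of_dvd _ dvd_rfl]
    have hv' : vtx L (m₀ + 1 + (n - 2)) = vtx L ((m₀+n-1) % n) := by
      apply vtx_congr
      rw [← hnn, show m₀ + 1 + (n-2) = m₀ + n - 1 by omega, Nat.mod_mod_of_dvd _ dvd_rfl]
    rcases hends with ⟨he1, he2⟩ | ⟨he1, he2⟩
    · exact ivt hLne f g hinj hcdef.symm (n-2) (m₀+1) hline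
        (by rw [hu', he1, haA]; exact hgA) (by rw [hv', he2, hbB]; exact hgB)
    · have hinj' : ∀ y z : Pl, f y = f z → (-g) y = (-g) z → y = z := by
        intro y z h1 h2
        apply hinj y z h1
        rw [LinearMap.neg_apply, LinearMap.neg_apply] at h2
        linarith
      exact ivt hLne f (-g) hinj' hcdef.symm (n-2) (m₀+1) hline
        (by rw [hu', he1, hbB, LinearMap.neg_apply, LinearMap.neg_apply]; linarith)
        (by rw [hv', he2, haA, LinearMap.neg_apply, LinearMap.neg_apply]; linarith)

/-- if `n ≥ 5` and all polygons obtained by removing one vertex are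
convex, then the polygon is convex. -/
theorem stmt_1 (L : List Pl) (hn : 5 ≤ L.length)
    (h : ∀ α : ℕ, α < L.length → IsConvexPolygon (L.eraseIdx α)) :
    IsConvexPolygon L :=
  Set.Subset.antisymm (quasi L hn h) (main2 L hn h)
end
end

section
/- Let P = (V_0, …, V_{n-1}) be a strictly convex n-gon in ℝ² and let σ be a permutation of {0, …, n-1}. Then the n-gon Pσ := (V_{σ(0)}, …, V_{σ(n-1)}) is strictly convex if and only if σ belongs to the dihedral subgroup G_n of the symmetric group on {0, …, n-1} generated by the cyclic permutation θ (θ(i) = i+1 mod n) and the reflection ρ (ρ(0) = 0 and ρ(i) = n-i for i ∈ {1, …, n-1}). -/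
open Set

noncomputable section

/-- The union of the edges of the `m`-gon `V` (indices in `Fin m`, cyclic). -/
def edgF {m : ℕ} (V : Fin (m + 1) → Pl) : Set Pl :=
  ⋃ i : Fin (m + 1), segment ℝ (V i) (V (i + 1))

/-- Convexity of a polygon given as a function on `Fin m`. -/
def IsConvexPolyF {m : ℕ} (V : Fin (m + 1) → Pl) : Prop :=
  edgF V = frontier (convexHull ℝ (Set.range V))

/-- Strictness: any three vertices with increasing indices are non-collinear. -/
def IsStrictF {m : ℕ} (V : Fin m → Pl) : Prop :=
  ∀ i j k : Fin m, i < j → j < k → ¬ Collinear ℝ ({V i, V j, V k} : Set Pl)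

section Aux

variable {m : ℕ}

lemma edgF_comp_addRight (W : Fin (m + 1) → Pl) :
    edgF (W ∘ (Equiv.addRight (1 : Fin (m + 1)))) = edgF W := by
  unfold edgF
  ext x
  simp only [mem_iUnion, Function.comp_apply, Equiv.coe_addRight]
  constructor
  · rintro ⟨i, h⟩
    exact ⟨i + 1, h⟩
  · rintro ⟨i, h⟩
    refine ⟨i - 1, ?_⟩
    simpa [sub_add_cancel] using h

open Fin.CommRing in
lemma edgF_comp_neg (W : Fin (m + 1) → Pl) :
    edgF (W ∘ (Equiv.neg (Fin (m + 1)))) = edgF W := by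
  unfold edgF
  ext x
  simp only [mem_iUnion, Function.comp_apply, Equiv.neg_apply]
  constructor
  · rintro ⟨i, h⟩
    refine ⟨-(i + 1), ?_⟩
    have h1 : -(i + 1) + 1 = -i := by ring
    rw [h1, segment_symm]
    exact h
  · rintro ⟨i, h⟩
    refine ⟨-(i + 1), ?_⟩
    have h1 : (- -(i + 1) : Fin (m + 1)) = i + 1 := by ring
    have h2 : (-(-(i + 1) + 1) : Fin (m + 1)) = i := by ring
    rw [h1, h2, segment_symm]
    exact h

lemma edgF_comp_closure {σ : Equiv.Perm (Fin (m + 1))}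
    (hσ : σ ∈ Subgroup.closure
      ({Equiv.addRight (1 : Fin (m + 1)), Equiv.neg (Fin (m + 1))} :
        Set (Equiv.Perm (Fin (m + 1))))) :
    ∀ W : Fin (m + 1) → Pl, edgF (W ∘ σ) = edgF W := by
  induction hσ using Subgroup.closure_induction with
  | mem x hx =>
    rcases hx with rfl | rfl
    · exact fun W => edgF_comp_addRight W
    · exact fun W => edgF_comp_neg W
  | one => intro W; rfl
  | mul x y hx hy ihx ihy =>
    intro W
    have : W ∘ ⇑(x * y) = (W ∘ ⇑x) ∘ ⇑y := rfl
    rw [this, ihy, ihx]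
  | inv x hx ih =>
    intro W
    have h := ih (W ∘ ⇑x⁻¹)
    have h2 : (W ∘ ⇑x⁻¹) ∘ ⇑x = W := by
      funext p; simp
    rwa [h2, eq_comm] at h

lemma notCollinear_of_ne {V : Fin m → Pl} (h : IsStrictF V) {a b c : Fin m}
    (hab : a ≠ b) (hac : a ≠ c) (hbc : b ≠ c) :
    ¬ Collinear ℝ ({V a, V b, V c} : Set Pl) := by
  intro hcol
  have key : ∀ x y z : Fin m, x < y → y < z →
      ({V x, V y, V z} : Set Pl) = {V a, V b, V c} → False := by
    intro x y z h1 h2 he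
    exact h x y z h1 h2 (he ▸ hcol)
  rcases lt_trichotomy a b with h1 | h1 | h1
  · rcases lt_trichotomy b c with h2 | h2 | h2
    · exact key a b c h1 h2 rfl
    · exact hbc h2
    · rcases lt_trichotomy a c with h3 | h3 | h3
      · refine key a c b h3 h2 ?_
        ext p; simp only [Set.mem_insert_iff, Set.mem_singleton_iff]; tauto
      · exact hac h3
      · refine key c a b h3 h1 ?_
        ext p; simp only [Set.mem_insert_iff, Set.mem_singleton_iff]; tauto
  · exact hab h1
  · rcases lt_trichotomy a c with h3 | h3 | h3
    · refine key b a c h1 h3 ?_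
      ext p; simp only [Set.mem_insert_iff, Set.mem_singleton_iff]; tauto
    · exact hac h3
    · rcases lt_trichotomy b c with h2 | h2 | h2
      · refine key b c a h2 h3 ?_
        ext p; simp only [Set.mem_insert_iff, Set.mem_singleton_iff]; tauto
      · exact hbc h2
      · refine key c b a h2 h1 ?_
        ext p; simp only [Set.mem_insert_iff, Set.mem_singleton_iff]; tauto

lemma injective_of_strict (hm : 3 ≤ m) {V : Fin m → Pl} (h : IsStrictF V) :
    Function.Injective V := by
  intro a b hV
  by_contra hab
  have hcompl : ({a, b}ᶜ : Finset (Fin m)).Nonempty := by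
    rw [← Finset.card_pos, Finset.card_compl]
    have h1 : ({a, b} : Finset (Fin m)).card ≤ 2 :=
      (Finset.card_insert_le _ _).trans (by simp)
    have h2 : Fintype.card (Fin m) = m := Fintype.card_fin m
    omega
  obtain ⟨c, hc⟩ := hcompl
  simp only [Finset.mem_compl, Finset.mem_insert, Finset.mem_singleton, not_or] at hc
  refine notCollinear_of_ne h hab (Ne.symm hc.1) (Ne.symm hc.2) ?_
  refine Collinear.subset ?_ (collinear_pair ℝ (V a) (V c))
  intro p hp
  simp only [Set.mem_insert_iff, Set.mem_singleton_iff] at hp ⊢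
  rcases hp with h' | h' | h'
  · exact Or.inl h'
  · exact Or.inl (by rw [h', ← hV])
  · exact Or.inr h'

lemma collinear_of_line (f : Pl →ₗ[ℝ] ℝ) (hf : f ≠ 0) {c : ℝ} {x y z : Pl}
    (hx : f x = c) (hy : f y = c) (hz : f z = c) :
    Collinear ℝ ({x, y, z} : Set Pl) := by
  rw [collinear_iff_rank_le_one]
  have hsub : vectorSpan ℝ ({x, y, z} : Set Pl) ≤ LinearMap.ker f := by
    rw [vectorSpan_def, Submodule.span_le]
    rintro w ⟨p, hp, q, hq, rfl⟩
    have hfp : f p = c := by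
      rcases hp with rfl | rfl | rfl <;> assumption
    have hfq : f q = c := by
      rcases hq with rfl | rfl | rfl <;> assumption
    simp only [SetLike.mem_coe, LinearMap.mem_ker, vsub_eq_sub, map_sub, hfp, hfq, sub_self]
  have hker : Module.finrank ℝ (LinearMap.ker f) ≤ 1 := by
    have hr := LinearMap.finrank_range_add_finrank_ker f
    have htot : Module.finrank ℝ Pl = 2 := finrank_euclideanSpace_fin
    have hrange : 0 < Module.finrank ℝ (LinearMap.range f) := by
      rw [Module.finrank_pos_iff]
      rw [Submodule.nontrivial_iff_ne_bot, Ne, LinearMap.range_eq_bot]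
      exact hf
    omega
  calc Module.rank ℝ (vectorSpan ℝ ({x, y, z} : Set Pl))
      ≤ Module.rank ℝ (LinearMap.ker f) := Submodule.rank_mono hsub
    _ = (Module.finrank ℝ (LinearMap.ker f) : Cardinal) :=
        (Module.finrank_eq_rank ℝ _).symm
    _ ≤ 1 := by exact_mod_cast hker

end Aux
section Aux2

variable {m : ℕ}

lemma exists_supp {S : Set Pl} (hspan : affineSpan ℝ S = ⊤) {M : Pl}
    (hM : M ∈ frontier (convexHull ℝ S)) :
    ∃ f : Pl →L[ℝ] ℝ, (∃ y, f y < f M) ∧ ∀ x ∈ convexHull ℝ S, f x ≤ f M := by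
  set K := convexHull ℝ S with hK
  have hKconv : Convex ℝ K := convex_convexHull ℝ S
  have hint : (interior K).Nonempty := by
    rw [hKconv.interior_nonempty_iff_affineSpan_eq_top, hK, affineSpan_convexHull]
    exact hspan
  have hMnotint : M ∉ interior K := hM.2
  obtain ⟨f, hf⟩ :=
    geometric_hahn_banach_open_point (hKconv.interior) isOpen_interior hMnotint
  obtain ⟨y, hy⟩ := hint
  refine ⟨f, ⟨y, hf y hy⟩, ?_⟩
  intro x hx
  by_contra hlt
  push_neg at hlt
  have hfy : f y < f M := hf y hy
  have hfx : f M < f x := hlt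
  obtain ⟨t, ht1, ht2⟩ := exists_between (show (f M - f y) / (f x - f y) < 1 by
    rw [div_lt_one (by linarith)]; linarith)
  have ht0 : 0 < t := lt_of_le_of_lt (div_nonneg (by linarith) (by linarith)) ht1
  have hz : (1 - t) • y + t • x ∈ interior K :=
    hKconv.combo_interior_self_mem_interior hy hx (by linarith) (by linarith) (by ring)
  have := hf _ hz
  rw [map_add, map_smul, map_smul] at this
  have htx : (f M - f y) < t * (f x - f y) := by
    rw [div_lt_iff₀ (by linarith)] at ht1
    linarith
  simp only [smul_eq_mul] at this
  nlinarith

lemma adjacent_of_segment_subset (hm : 2 ≤ m) (V : Fin (m + 1) → Pl)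
    (hstrict : IsStrictF V) (hconv : IsConvexPolyF V) {a b : Fin (m + 1)}
    (hab : a ≠ b) (hsub : segment ℝ (V a) (V b) ⊆ edgF V) :
    b = a + 1 ∨ a = b + 1 := by
  by_contra hcon
  push_neg at hcon
  obtain ⟨h1, h2⟩ := hcon
  have hone : (1 : Fin (m + 1)) ≠ 0 := by
    have hv1 : ((1 : Fin (m + 1)) : ℕ) = 1 := by
      rw [Fin.val_one']
      exact Nat.mod_eq_of_lt (by omega)
    intro h
    rw [h] at hv1
    simp at hv1
  have hinj : Function.Injective V := injective_of_strict (by omega) hstrict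
  have h012 : ¬ Collinear ℝ ({V ⟨0, by omega⟩, V ⟨1, by omega⟩, V ⟨2, by omega⟩} : Set Pl) :=
    hstrict ⟨0, by omega⟩ ⟨1, by omega⟩ ⟨2, by omega⟩ (by simp [Fin.lt_def]) (by simp [Fin.lt_def])
  have hspan : affineSpan ℝ (Set.range V) = ⊤ := by
    have hnc : ¬ Collinear ℝ (Set.range V) := by
      intro hc
      exact h012 (hc.subset (by
        rintro p (rfl | rfl | rfl) <;> exact Set.mem_range_self _))
    rw [AffineSubspace.affineSpan_eq_top_iff_vectorSpan_eq_top_of_nonempty ℝ Pl Pl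
      (Set.range_nonempty V)]
    by_contra hne
    have hlt : Module.finrank ℝ (vectorSpan ℝ (Set.range V)) <
        Module.finrank ℝ Pl :=
      Submodule.finrank_lt hne
    rw [finrank_euclideanSpace_fin] at hlt
    exact hnc (collinear_iff_finrank_le_one.2 (by omega))
  set M := midpoint ℝ (V a) (V b) with hMdef
  have hMseg : M ∈ segment ℝ (V a) (V b) := midpoint_mem_segment _ _
  have hMedg : M ∈ edgF V := hsub hMseg
  have hMfr : M ∈ frontier (convexHull ℝ (Set.range V)) := by
    rw [← hconv]; exact hMedg
  obtain ⟨f, ⟨y, hy⟩, hfle⟩ := exists_supp hspan hMfr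
  have hf0 : (f : Pl →ₗ[ℝ] ℝ) ≠ 0 := by
    intro h
    have hz1 : f y = 0 := by
      have := congrArg (fun g => g y) (congrArg DFunLike.coe h)
      simpa using this
    have hz2 : f M = 0 := by
      have := congrArg (fun g => g M) (congrArg DFunLike.coe h)
      simpa using this
    rw [hz1, hz2] at hy
    exact lt_irrefl _ hy
  have hmem : ∀ t : Fin (m + 1), V t ∈ convexHull ℝ (Set.range V) :=
    fun t => subset_convexHull ℝ _ (Set.mem_range_self t)
  have hfa : f (V a) ≤ f M := hfle _ (hmem a)
  have hfb : f (V b) ≤ f M := hfle _ (hmem b)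
  have hMhalf : f M = (f (V a) + f (V b)) / 2 := by
    have : M = (2⁻¹ : ℝ) • (V a + V b) := by
      rw [hMdef, midpoint_eq_smul_add, invOf_eq_inv]
    rw [this, map_smul, map_add]
    simp only [smul_eq_mul]
    ring
  have hfa' : f (V a) = f M := by linarith
  have hfb' : f (V b) = f M := by linarith
  obtain ⟨i, hi⟩ := Set.mem_iUnion.1 hMedg
  obtain ⟨u, v, hu, hv, huv, hM'⟩ := hi
  have hfi : f (V i) ≤ f M := hfle _ (hmem i)
  have hfi1 : f (V (i + 1)) ≤ f M := hfle _ (hmem (i + 1))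
  have key : ∃ t : Fin (m + 1), t ≠ a ∧ t ≠ b ∧ f (V t) = f M := by
    by_cases hua : u = 0
    · have hv1 : v = 1 := by linarith
      have hMv : M = V (i + 1) := by rw [← hM', hua, hv1]; simp
      refine ⟨i + 1, ?_, ?_, by rw [← hMv]⟩
      · rintro h
        exact hab (hinj ((midpoint_eq_left_iff (R := ℝ)).1 (by rw [← hMdef, hMv, h])))
      · rintro h
        exact hab (hinj ((midpoint_eq_right_iff (R := ℝ)).1 (by rw [← hMdef, hMv, h])))
    · by_cases hva : v = 0
      · have hu1 : u = 1 := by linarith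
        have hMv : M = V i := by rw [← hM', hva, hu1]; simp
        refine ⟨i, ?_, ?_, by rw [← hMv]⟩
        · rintro h
          exact hab (hinj ((midpoint_eq_left_iff (R := ℝ)).1 (by rw [← hMdef, hMv, h])))
        · rintro h
          exact hab (hinj ((midpoint_eq_right_iff (R := ℝ)).1 (by rw [← hMdef, hMv, h])))
      · have hu' : 0 < u := lt_of_le_of_ne hu (Ne.symm hua)
        have hv' : 0 < v := lt_of_le_of_ne hv (Ne.symm hva)
        have heq : u * f (V i) + v * f (V (i + 1)) = f M := by
          rw [← hM', map_add, map_smul, map_smul]; simp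
        have hfi' : f (V i) = f M := by
          by_contra hne
          have hlt : f (V i) < f M := lt_of_le_of_ne hfi hne
          have hmul := mul_lt_mul_of_pos_left hlt hu'
          have hmul2 := mul_le_mul_of_nonneg_left hfi1 hv
          have hsum : u * f M + v * f M = f M := by rw [← add_mul, huv, one_mul]
          linarith
        have hfi1' : f (V (i + 1)) = f M := by
          by_contra hne
          have hlt : f (V (i + 1)) < f M := lt_of_le_of_ne hfi1 hne
          have hmul := mul_lt_mul_of_pos_left hlt hv'
          have hmul2 := mul_le_mul_of_nonneg_left hfi hu
          have hsum : u * f M + v * f M = f M := by rw [← add_mul, huv, one_mul]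
          linarith
        by_cases hia : i = a
        · refine ⟨i + 1, ?_, ?_, hfi1'⟩
          · rw [hia]
            intro h
            exact hone (by rwa [add_eq_left] at h)
          · rw [hia]
            exact fun h => h1 h.symm
        · by_cases hib : i = b
          · refine ⟨i + 1, ?_, ?_, hfi1'⟩
            · rw [hib]
              exact fun h => h2 h.symm
            · rw [hib]
              intro h
              exact hone (by rwa [add_eq_left] at h)
          · exact ⟨i, hia, hib, hfi'⟩
  obtain ⟨t, hta, htb, hft⟩ := key
  exact notCollinear_of_ne hstrict hab (Ne.symm hta) (Ne.symm htb)
    (collinear_of_line (f : Pl →ₗ[ℝ] ℝ) hf0 hfa' hfb' hft)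

end Aux2

section Aux3

variable {m : ℕ}

open Fin.CommRing in
lemma addRight_mem_closure (c : Fin (m + 1)) :
    Equiv.addRight c ∈ Subgroup.closure
      ({Equiv.addRight (1 : Fin (m + 1)), Equiv.neg (Fin (m + 1))} :
        Set (Equiv.Perm (Fin (m + 1)))) := by
  have key : ∀ k : ℕ, Equiv.addRight ((k : Fin (m + 1))) ∈ Subgroup.closure
      ({Equiv.addRight (1 : Fin (m + 1)), Equiv.neg (Fin (m + 1))} :
        Set (Equiv.Perm (Fin (m + 1)))) := by
    intro k
    induction k with
    | zero =>
      have h0 : Equiv.addRight (((0 : ℕ) : Fin (m + 1))) = 1 := by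
        ext x
        simp
      rw [h0]
      exact one_mem _
    | succ k ih =>
      have hstep : Equiv.addRight (((k + 1 : ℕ)) : Fin (m + 1)) =
          Equiv.addRight ((k : ℕ) : Fin (m + 1)) * Equiv.addRight (1 : Fin (m + 1)) := by
        ext x
        simp only [Equiv.coe_addRight, Equiv.Perm.mul_apply]
        push_cast
        ring
      rw [hstep]
      exact mul_mem ih (Subgroup.subset_closure (Set.mem_insert _ _))
  have := key c.val
  rwa [Fin.cast_val_eq_self] at this

end Aux3

/-- for a strictly convex `n`-gon `V` and a permutation `σ` of the
index set, the permuted polygon `V ∘ σ` is strictly convex iff `σ` lies in the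
dihedral subgroup generated by the cyclic shift `i ↦ i + 1` and the reflection
`i ↦ -i`. -/
theorem stmt_4 (n : ℕ) (V : Fin (n + 1) → Pl)
    (hstrict : IsStrictF V) (hconv : IsConvexPolyF V)
    (σ : Equiv.Perm (Fin (n + 1))) :
    (IsStrictF (V ∘ σ) ∧ IsConvexPolyF (V ∘ σ)) ↔
      σ ∈ Subgroup.closure
        ({Equiv.addRight (1 : Fin (n + 1)), Equiv.neg (Fin (n + 1))} :
          Set (Equiv.Perm (Fin (n + 1)))) := by
  open Fin.CommRing in (
  constructor
  · rintro ⟨-, hconvσ⟩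
    have hrange : Set.range (V ∘ ⇑σ) = Set.range V := σ.surjective.range_comp V
    unfold IsConvexPolyF at hconvσ hconv
    have hedge : edgF (V ∘ ⇑σ) = edgF V := by
      rw [hconvσ, hrange, ← hconv]
    clear hconvσ
    rcases n with _ | _ | n
    · -- n = 0
      haveI : Subsingleton (Fin (0 + 1)) := Fin.subsingleton_one
      have hσ1 : σ = 1 := Equiv.ext fun x => Subsingleton.elim _ _
      rw [hσ1]
      exact one_mem _
    · -- n = 1
      have hd : ∀ τ : Equiv.Perm (Fin 2), τ = 1 ∨ τ = Equiv.addRight 1 := by decide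
      rcases hd σ with rfl | rfl
      · exact one_mem _
      · exact Subgroup.subset_closure (Set.mem_insert _ _)
    · -- n + 3 vertices
      have hone : (1 : Fin (n + 3)) ≠ 0 := by
        have hv1 : ((1 : Fin (n + 3)) : ℕ) = 1 := by
          rw [Fin.val_one']
          exact Nat.mod_eq_of_lt (by omega)
        intro h
        rw [h] at hv1
        simp at hv1
      have htwo : (2 : Fin (n + 3)) ≠ 0 := by
        have hv2 : ((2 : Fin (n + 3)) : ℕ) = 2 := by
          rw [show ((2 : Fin (n + 3))) = ((2 : ℕ) : Fin (n + 3)) by norm_cast]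
          rw [Fin.val_natCast]
          exact Nat.mod_eq_of_lt (by omega)
        intro h
        rw [h] at hv2
        simp at hv2
      have hadj : ∀ i : Fin (n + 3), σ (i + 1) = σ i + 1 ∨ σ i = σ (i + 1) + 1 := by
        intro i
        have hne : σ i ≠ σ (i + 1) := by
          intro h
          exact hone (left_eq_add.1 (σ.injective h))
        have hsubseg : segment ℝ (V (σ i)) (V (σ (i + 1))) ⊆ edgF V := by
          rw [← hedge]
          exact Set.subset_iUnion
            (fun j : Fin (n + 3) => segment ℝ ((V ∘ ⇑σ) j) ((V ∘ ⇑σ) (j + 1))) i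
        exact adjacent_of_segment_subset (by omega) V hstrict hconv hne hsubseg
      rcases hadj 0 with h0 | h0
      · have hstep : ∀ i : Fin (n + 3), σ (i + 1) = σ i + 1 → σ (i + 1 + 1) = σ (i + 1) + 1 := by
          intro i hi
          rcases hadj (i + 1) with h | h
          · exact h
          · exfalso
            have hii : σ (i + 1 + 1) = σ i := by
              rw [hi] at h
              exact add_right_cancel h.symm
            have h2 : i + 1 + 1 = i := σ.injective hii
            apply htwo
            have h3 : i + 2 = i := by rwa [show i + 2 = i + 1 + 1 from by ring]
            exact (left_eq_add.1 h3.symm)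
        have hnat : ∀ k : ℕ, σ ((k : Fin (n + 3)) + 1) = σ ((k : Fin (n + 3))) + 1 := by
          intro k
          induction k with
          | zero => simpa using h0
          | succ k ih =>
            have hc : ((k + 1 : ℕ) : Fin (n + 3)) = (k : Fin (n + 3)) + 1 := by
              push_cast
              ring
            rw [hc]
            exact hstep _ ih
        have hsucc : ∀ i : Fin (n + 3), σ (i + 1) = σ i + 1 := by
          intro i
          have := hnat i.val
          rwa [Fin.cast_val_eq_self] at this
        have hval : ∀ k : ℕ, σ ((k : Fin (n + 3))) = σ 0 + (k : Fin (n + 3)) := by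
          intro k
          induction k with
          | zero => simp
          | succ k ih =>
            have hc : ((k + 1 : ℕ) : Fin (n + 3)) = (k : Fin (n + 3)) + 1 := by
              push_cast
              ring
            rw [hc, hsucc, ih]
            exact add_assoc _ _ _
        have hσ : σ = Equiv.addRight (σ 0) := by
          apply Equiv.ext
          intro i
          have := hval i.val
          rw [Fin.cast_val_eq_self] at this
          rw [this]
          simp only [Equiv.coe_addRight]
          exact add_comm _ _
        rw [hσ]
        exact addRight_mem_closure _
      · have hstep : ∀ i : Fin (n + 3), σ (i + 1) = σ i - 1 → σ (i + 1 + 1) = σ (i + 1) - 1 := by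
          intro i hi
          rcases hadj (i + 1) with h | h
          · exfalso
            have hii : σ (i + 1 + 1) = σ i := by
              rw [h, hi]
              ring
            have h2 : i + 1 + 1 = i := σ.injective hii
            apply htwo
            have h3 : i + 2 = i := by rwa [show i + 2 = i + 1 + 1 from by ring]
            exact (left_eq_add.1 h3.symm)
          · rw [eq_sub_iff_add_eq]
            exact h.symm
        have h0' : σ ((0 : Fin (n + 3)) + 1) = σ 0 - 1 := by
          rw [eq_sub_iff_add_eq]
          exact h0.symm
        have hnat : ∀ k : ℕ, σ ((k : Fin (n + 3)) + 1) = σ ((k : Fin (n + 3))) - 1 := by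
          intro k
          induction k with
          | zero => simpa using h0'
          | succ k ih =>
            have hc : ((k + 1 : ℕ) : Fin (n + 3)) = (k : Fin (n + 3)) + 1 := by
              push_cast
              ring
            rw [hc]
            exact hstep _ ih
        have hsucc : ∀ i : Fin (n + 3), σ (i + 1) = σ i - 1 := by
          intro i
          have := hnat i.val
          rwa [Fin.cast_val_eq_self] at this
        have hval : ∀ k : ℕ, σ ((k : Fin (n + 3))) = σ 0 - (k : Fin (n + 3)) := by
          intro k
          induction k with
          | zero => simp
          | succ k ih =>
            have hc : ((k + 1 : ℕ) : Fin (n + 3)) = (k : Fin (n + 3)) + 1 := by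
              push_cast
              ring
            rw [hc, hsucc, ih]
            ring
        have hσ : σ = Equiv.addRight (σ 0) * Equiv.neg (Fin (n + 3)) := by
          apply Equiv.ext
          intro i
          have := hval i.val
          rw [Fin.cast_val_eq_self] at this
          rw [Equiv.Perm.mul_apply, this]
          simp only [Equiv.coe_addRight, Equiv.neg_apply]
          ring
        rw [hσ]
        exact mul_mem (addRight_mem_closure _)
          (Subgroup.subset_closure (Set.mem_insert_of_mem _ rfl))
  · intro hσ
    refine ⟨?_, ?_⟩
    · intro i j k hij hjk
      exact notCollinear_of_ne hstrict (σ.injective.ne hij.ne)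
        (σ.injective.ne (hij.trans hjk).ne) (σ.injective.ne hjk.ne)
    · unfold IsConvexPolyF
      rw [edgF_comp_closure hσ V, σ.surjective.range_comp V, hconv])
end
end

section
/- Let P = (V_0, …, V_{n-1}) be a strictly convex n-gon in ℝ² and let α, i, β be integers with 1 ≤ α < i < β ≤ n-1. Then V_α and V_β are NOT to one side of the segment [V_0, V_i]; that is, there is no line ℓ containing [V_0, V_i] that is the boundary of a closed half-plane containing {V_0, V_i, V_α, V_β}. -/
open Set

noncomputable section

private lemma line_collinear (f : Pl →ₗ[ℝ] ℝ) (hf : f ≠ 0) (c : ℝ) :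
    Collinear ℝ {x : Pl | f x = c} := by
  rw [collinear_iff_rank_le_one]
  have hsub : vectorSpan ℝ {x : Pl | f x = c} ≤ LinearMap.ker f := by
    rw [vectorSpan_def]
    apply Submodule.span_le.mpr
    rintro u ⟨a, ha, b, hb, rfl⟩
    simp only [Set.mem_setOf_eq] at ha hb
    simp [LinearMap.mem_ker, vsub_eq_sub, map_sub, ha, hb]
  have hker : Module.finrank ℝ (LinearMap.ker f) = 1 := by
    obtain ⟨v, hv⟩ : ∃ v, f v ≠ 0 := by
      by_contra h; push_neg at h; exact hf (LinearMap.ext fun x => by simp [h x])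
    have h1 : LinearMap.range f = ⊤ := by
      rw [LinearMap.range_eq_top]
      intro r
      exact ⟨(r / f v) • v, by simp [map_smul, smul_eq_mul, div_mul_cancel₀ _ hv]⟩
    have h2 := f.finrank_range_add_finrank_ker
    rw [h1] at h2
    have h3 : Module.finrank ℝ (⊤ : Submodule ℝ ℝ) = 1 := by simp
    have h4 : Module.finrank ℝ Pl = 2 := finrank_euclideanSpace_fin
    omega
  calc Module.rank ℝ (vectorSpan ℝ {x : Pl | f x = c})
      ≤ Module.rank ℝ (LinearMap.ker f) := Submodule.rank_mono hsub
    _ = 1 := by rw [← Module.finrank_eq_rank, hker]; norm_num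

private lemma discIVT (g : ℕ → ℝ) (c : ℝ) : ∀ b a : ℕ, a ≤ b →
    (∀ j, a ≤ j → j ≤ b → g j ≠ c) →
    ((g a < c ∧ c < g b) ∨ (c < g a ∧ g b < c)) →
    ∃ j, a ≤ j ∧ j < b ∧ ((g j < c ∧ c < g (j + 1)) ∨ (c < g j ∧ g (j + 1) < c)) := by
  intro b
  induction b with
  | zero =>
    intro a ha _ hs
    have : a = 0 := by omega
    subst this
    rcases hs with ⟨h1, h2⟩ | ⟨h1, h2⟩ <;> linarith
  | succ b ih =>
    intro a ha hne hs
    rcases Nat.lt_or_ge a (b + 1) with hab | hab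
    · have hab' : a ≤ b := by omega
      rcases (hne b (by omega) (by omega)).lt_or_gt with hb | hb
      · rcases hs with ⟨h1, h2⟩ | ⟨h1, h2⟩
        · exact ⟨b, by omega, by omega, Or.inl ⟨hb, h2⟩⟩
        · obtain ⟨j, hj1, hj2, hj3⟩ := ih a hab'
            (fun j hx hy => hne j hx (by omega)) (Or.inr ⟨h1, hb⟩)
          exact ⟨j, hj1, by omega, hj3⟩
      · rcases hs with ⟨h1, h2⟩ | ⟨h1, h2⟩
        · obtain ⟨j, hj1, hj2, hj3⟩ := ih a hab'
            (fun j hx hy => hne j hx (by omega)) (Or.inl ⟨h1, hb⟩)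
          exact ⟨j, hj1, by omega, hj3⟩
        · exact ⟨b, by omega, by omega, Or.inr ⟨hb, h2⟩⟩
    · have : a = b + 1 := by omega
      subst this
      rcases hs with ⟨h1, h2⟩ | ⟨h1, h2⟩ <;> linarith

private lemma strict_between_param {p q c : ℝ} (h : (p < c ∧ c < q) ∨ (c < p ∧ q < c)) :
    ∃ t : ℝ, 0 < t ∧ t < 1 ∧ (1 - t) * p + t * q = c := by
  rcases h with ⟨h1, h2⟩ | ⟨h1, h2⟩
  · have hqp : 0 < q - p := by linarith
    refine ⟨(c - p) / (q - p), div_pos (by linarith) hqp, (div_lt_one hqp).mpr (by linarith), ?_⟩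
    field_simp
    ring
  · have hpq : 0 < p - q := by linarith
    refine ⟨(p - c) / (p - q), div_pos (by linarith) hpq, (div_lt_one hpq).mpr (by linarith), ?_⟩
    field_simp
    ring

private lemma mem_openSegment_param (v p₀ : Pl) {ta tb s : ℝ}
    (h : (ta < s ∧ s < tb) ∨ (tb < s ∧ s < ta)) :
    s • v + p₀ ∈ openSegment ℝ (ta • v + p₀) (tb • v + p₀) := by
  obtain ⟨t, ht0, ht1, hte⟩ := strict_between_param (p := ta) (q := tb) (c := s) (by tauto)
  rw [openSegment_eq_image]
  exact ⟨t, ⟨ht0, ht1⟩, by rw [← hte]; module⟩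

private lemma vtx_eq_getElem' (L : List Pl) {j : ℕ} (h : j < L.length) :
    (L.getD (j % L.length) 0) = L[j] := by
  rw [Nat.mod_eq_of_lt h, List.getD_eq_getElem _ _ h]

private lemma final_step {K : Set Pl} (hK : Convex ℝ K) (hKcl : IsClosed K)
    {v p₀ : Pl} {t0 ti tz tw : ℝ}
    (h0 : t0 • v + p₀ ∈ frontier K) (hi : ti • v + p₀ ∈ frontier K)
    (hz : tz • v + p₀ ∈ frontier K) (hw : tw • v + p₀ ∈ interior K)
    (hw1 : t0 < tw) (hw2 : tw < ti)
    (hz0 : tz ≠ t0) (hzi : tz ≠ ti) (hzw : tz ≠ tw) : False := by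
  have hKfr : frontier K ⊆ K := fun x hx => hKcl.closure_eq ▸ frontier_subset_closure hx
  have absorb : ∀ tp tq : ℝ, tp • v + p₀ ∈ frontier K → tq • v + p₀ ∈ K →
      ((tw < tp ∧ tp < tq) ∨ (tq < tp ∧ tp < tw)) → False := by
    intro tp tq hp hq hord
    have h1 : tp • v + p₀ ∈ openSegment ℝ (tw • v + p₀) (tq • v + p₀) :=
      mem_openSegment_param v p₀ hord
    have h2 : tp • v + p₀ ∈ interior K :=
      hK.openSegment_interior_closure_subset_interior hw (by rw [hKcl.closure_eq]; exact hq) h1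
    rw [← closure_diff_interior] at hp
    exact hp.2 h2
  rcases hzw.lt_or_gt with h | h
  · rcases hz0.lt_or_gt with h2 | h2
    · exact absorb t0 tz h0 (hKfr hz) (Or.inr ⟨h2, hw1⟩)
    · exact absorb tz t0 hz (hKfr h0) (Or.inr ⟨h2, h⟩)
  · rcases hzi.lt_or_gt with h2 | h2
    · exact absorb tz ti hz (hKfr hi) (Or.inl ⟨h, h2⟩)
    · exact absorb ti tz hi (hKfr hz) (Or.inl ⟨hw2, h2⟩)


/-- for a strictly convex polygon and `1 ≤ α < i < β ≤ n-1`, the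
vertices `V_α` and `V_β` are not to one side of the segment `[V_0, V_i]`. -/
theorem stmt_6 (L : List Pl) (hstrict : IsStrict L) (hconv : IsConvexPolygon L)
    (α i β : ℕ) (hα : 1 ≤ α) (hαi : α < i) (hiβ : i < β) (hβ : β ≤ L.length - 1) :
    ¬ OneSide (vtx L 0) (vtx L i)
        ({vtx L 0, vtx L i, vtx L α, vtx L β} : Set Pl) := by

  rintro ⟨f, c, hf, hfV0, hfVi, hle⟩
  have hβn : β < L.length := by omega
  have hn4 : 4 ≤ L.length := by omega
  have hin : i + 1 < L.length := by omega
  set n := L.length with hn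
  have hcolsub : ∀ s : Set Pl, s ⊆ {x : Pl | f x = c} → Collinear ℝ s :=
    fun s hs => (line_collinear f hf c).subset hs
  have hvtx_getD : ∀ j : ℕ, j < n → vtx L j = L.getD (j % L.length) 0 := fun j _ => rfl
  have hvtx_mem : ∀ j : ℕ, j < n → vtx L j ∈ vertexSet L := by
    intro j hj
    show vtx L j ∈ L
    rw [show vtx L j = L[j] from vtx_eq_getElem' L hj]
    exact List.getElem_mem hj
  set K := convexHull ℝ (vertexSet L) with hK
  have hvfin : (vertexSet L).Finite := L.finite_toSet
  have hKcomp : IsCompact K := hvfin.isCompact_convexHull ℝ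
  have hKcl : IsClosed K := hKcomp.isClosed
  have hKconv : Convex ℝ K := convex_convexHull ℝ _
  have hfrK : edg L = frontier K := hconv
  have hVmem : ∀ j, j < n → vtx L j ∈ K :=
    fun j hj => subset_convexHull ℝ _ (hvtx_mem j hj)
  have hV0Vi : vtx L 0 ≠ vtx L i := by
    intro h
    refine hstrict 0 1 i (by omega) (by omega) (by omega) ?_
    refine Collinear.subset ?_ (collinear_pair ℝ (vtx L 0) (vtx L 1))
    intro x hx
    simp only [Set.mem_insert_iff, Set.mem_singleton_iff] at hx ⊢
    rcases hx with rfl | rfl | rfl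
    · left; rfl
    · right; rfl
    · left; exact h.symm
  have hfne : ∀ j, 1 ≤ j → j < n → j ≠ i → f (vtx L j) ≠ c := by
    intro j h1 h2 h3 hc
    rcases h3.lt_or_gt with hji | hji
    · refine hstrict 0 j i (by omega) hji (by omega) ?_
      refine hcolsub _ ?_
      intro x hx
      simp only [Set.mem_insert_iff, Set.mem_singleton_iff] at hx
      rcases hx with rfl | rfl | rfl <;> simp [Set.mem_setOf_eq, hfV0, hc, hfVi]
    · refine hstrict 0 i j (by omega) hji h2 ?_
      refine hcolsub _ ?_
      intro x hx
      simp only [Set.mem_insert_iff, Set.mem_singleton_iff] at hx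
      rcases hx with rfl | rfl | rfl <;> simp [Set.mem_setOf_eq, hfV0, hc, hfVi]
  have hfα : f (vtx L α) < c :=
    lt_of_le_of_ne (hle _ (by simp only [Set.mem_insert_iff, Set.mem_singleton_iff]; tauto))
      (hfne α hα (by omega) (by omega))
  have hfβ : f (vtx L β) < c :=
    lt_of_le_of_ne (hle _ (by simp only [Set.mem_insert_iff, Set.mem_singleton_iff]; tauto))
      (hfne β (by omega) hβn (by omega))
  have hV0K := hVmem 0 (by omega)
  have hViK := hVmem i (by omega)
  have hOsub : openSegment ℝ (vtx L 0) (vtx L i) ⊆ K := hKconv.openSegment_subset hV0K hViK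
  have hOline : ∀ x ∈ openSegment ℝ (vtx L 0) (vtx L i), f x = c := by
    intro x hx
    rw [openSegment_eq_image] at hx
    obtain ⟨u, hu, rfl⟩ := hx
    simp only [map_add, map_smul, smul_eq_mul, hfV0, hfVi]
    ring
  rcases (openSegment ℝ (vtx L 0) (vtx L i) ∩ interior K).eq_empty_or_nonempty with
    hOe | ⟨w, hwO, hwI⟩
  · -- the open chord lies on the frontier: pigeonhole
    have hOfr : openSegment ℝ (vtx L 0) (vtx L i) ⊆ edg L := by
      rw [hfrK, ← closure_diff_interior]
      intro x hx
      exact ⟨subset_closure (hOsub hx),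
        fun hxint => Set.eq_empty_iff_forall_notMem.mp hOe x ⟨hx, hxint⟩⟩
    have hinj2 : ∀ u1 u2 : ℝ,
        (1 - u1) • vtx L 0 + u1 • vtx L i = (1 - u2) • vtx L 0 + u2 • vtx L i → u1 = u2 := by
      intro u1 u2 h
      have h2 : (u1 - u2) • (vtx L i - vtx L 0) = 0 := by
        linear_combination (norm := module) h
      rcases smul_eq_zero.mp h2 with h3 | h3
      · exact sub_eq_zero.mp h3
      · exact absurd (sub_eq_zero.mp h3).symm hV0Vi
    have hOinf : (openSegment ℝ (vtx L 0) (vtx L i)).Infinite := by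
      rw [openSegment_eq_image]
      refine (Set.infinite_image_iff ?_).mpr (Set.Ioo_infinite (by norm_num))
      intro u1 _ u2 _ h
      exact hinj2 u1 u2 h
    have hpig : ∃ j < n, ¬ ((openSegment ℝ (vtx L 0) (vtx L i)) ∩
        segment ℝ (vtx L j) (vtx L (j + 1))).Subsingleton := by
      by_contra hall
      push_neg at hall
      have hcover : openSegment ℝ (vtx L 0) (vtx L i) ⊆
          ⋃ j ∈ Finset.range n, (openSegment ℝ (vtx L 0) (vtx L i) ∩
            segment ℝ (vtx L j) (vtx L (j + 1))) := by
        intro x hx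
        have hx2 := hOfr hx
        rw [edg] at hx2
        simp only [Set.mem_iUnion, Finset.mem_range] at hx2 ⊢
        obtain ⟨j, hj, hxj⟩ := hx2
        exact ⟨j, hj, hx, hxj⟩
      exact hOinf (Set.Finite.subset (Set.Finite.biUnion (Finset.range n).finite_toSet
        (fun j hj => (hall j (by simpa using hj)).finite)) hcover)
    obtain ⟨j, hjn, hns⟩ := hpig
    rw [Set.not_subsingleton_iff] at hns
    obtain ⟨a, ⟨haO, haseg⟩, b, ⟨hbO, hbseg⟩, hab⟩ := hns
    rw [segment_eq_image] at haseg hbseg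
    obtain ⟨s, hs, rfl⟩ := haseg
    obtain ⟨t, ht, rfl⟩ := hbseg
    have hst : s ≠ t := fun h => hab (by rw [h])
    have ha := hOline _ haO
    have hb := hOline _ hbO
    simp only [map_add, map_smul, smul_eq_mul] at ha hb
    have hkey : (s - t) * (f (vtx L (j + 1)) - f (vtx L j)) = 0 := by
      linear_combination ha - hb
    rcases mul_eq_zero.mp hkey with h | h
    · exact hst (sub_eq_zero.mp h)
    · have hq : f (vtx L (j + 1)) = f (vtx L j) := sub_eq_zero.mp h
      rw [hq] at ha
      have hp : f (vtx L j) = c := by linear_combination ha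
      have hj1 : f (vtx L (j + 1)) = c := by rw [hq]; exact hp
      by_cases hj0 : j = 0
      · subst hj0
        exact hfne 1 le_rfl (by omega) (by omega) (by simpa using hj1) 
      · by_cases hji : j = i
        · exact hfne (j + 1) (by omega) (by omega) (by omega) hj1
        · exact hfne j (by omega) hjn hji hp
  · -- there is an interior point on the chord
    have hfw : f w = c := hOline w hwO
    have hm : ∃ m, m < n ∧ c < f (vtx L m) := by
      by_contra hno
      push_neg at hno
      have hKle : ∀ x ∈ K, f x ≤ c := by
        have hsub : vertexSet L ⊆ {x : Pl | f x ≤ c} := by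
          intro x hx
          have hx' : x ∈ L := hx
          obtain ⟨jj, hjj, rfl⟩ := List.mem_iff_getElem.mp hx'
          rw [← vtx_eq_getElem' L hjj]
          exact hno jj hjj
        intro x hx
        exact convexHull_min hsub (convex_halfSpace_le (LinearMap.isLinear f) c) hx
      obtain ⟨v0, hv0⟩ : ∃ v0 : Pl, f v0 ≠ 0 := by
        by_contra h; push_neg at h; exact hf (LinearMap.ext fun x => by simp [h x])
      set v := (f v0)⁻¹ • v0 with hv
      have hfv : f v = 1 := by
        simp [hv, map_smul, smul_eq_mul, inv_mul_cancel₀ hv0]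
      have hvne : v ≠ 0 := fun h => by simp [h] at hfv
      obtain ⟨ε, hε, hball⟩ := Metric.isOpen_iff.mp isOpen_interior w hwI
      have hnv : 0 < ‖v‖ := norm_pos_iff.mpr hvne
      set δ := ε / (2 * ‖v‖) with hδ
      have hδpos : 0 < δ := by positivity
      have hmem : w + δ • v ∈ Metric.ball w ε := by
        rw [Metric.mem_ball, dist_eq_norm]
        have h1 : w + δ • v - w = δ • v := by module
        rw [h1, norm_smul, Real.norm_eq_abs, abs_of_pos hδpos]
        have h2 : δ * ‖v‖ = ε / 2 := by
          rw [hδ]; field_simp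
        rw [h2]; linarith
      have hy : w + δ • v ∈ K := interior_subset (hball hmem)
      have hle2 := hKle _ hy
      rw [map_add, map_smul, smul_eq_mul, hfv, hfw] at hle2
      linarith
    obtain ⟨m, hmn, hfm⟩ := hm
    have hm0 : m ≠ 0 := fun h => by rw [h, hfV0] at hfm; exact lt_irrefl _ hfm
    have hmi : m ≠ i := fun h => by rw [h, hfVi] at hfm; exact lt_irrefl _ hfm
    have key : ∃ j, 1 ≤ j ∧ j + 1 < n ∧ (j + 1 < i ∨ i < j) ∧
        ((f (vtx L j) < c ∧ c < f (vtx L (j + 1))) ∨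
          (c < f (vtx L j) ∧ f (vtx L (j + 1)) < c)) := by
      rcases hmi.lt_or_gt with hml | hmg
      · have hαm : α ≠ m := fun h => by rw [h] at hfα; linarith
        rcases hαm.lt_or_gt with h1 | h1
        · obtain ⟨j, hj1, hj2, hj3⟩ := discIVT (fun j => f (vtx L j)) c m α h1.le
            (fun j ha hb => hfne j (by omega) (by omega) (by omega)) (Or.inl ⟨hfα, hfm⟩)
          exact ⟨j, by omega, by omega, Or.inl (by omega), hj3⟩
        · obtain ⟨j, hj1, hj2, hj3⟩ := discIVT (fun j => f (vtx L j)) c α m h1.le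
            (fun j ha hb => hfne j (by omega) (by omega) (by omega)) (Or.inr ⟨hfm, hfα⟩)
          exact ⟨j, by omega, by omega, Or.inl (by omega), hj3⟩
      · have hβm : β ≠ m := fun h => by rw [h] at hfβ; linarith
        rcases hβm.lt_or_gt with h1 | h1
        · obtain ⟨j, hj1, hj2, hj3⟩ := discIVT (fun j => f (vtx L j)) c m β h1.le
            (fun j ha hb => hfne j (by omega) (by omega) (by omega)) (Or.inl ⟨hfβ, hfm⟩)
          exact ⟨j, by omega, by omega, Or.inr (by omega), hj3⟩
        · obtain ⟨j, hj1, hj2, hj3⟩ := discIVT (fun j => f (vtx L j)) c β m h1.le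
            (fun j ha hb => hfne j (by omega) (by omega) (by omega)) (Or.inr ⟨hfm, hfβ⟩)
          exact ⟨j, by omega, by omega, Or.inr (by omega), hj3⟩
    obtain ⟨j, hj1, hjn1, hjiord, hsign⟩ := key
    obtain ⟨t, ht0, ht1, hteq⟩ := strict_between_param hsign
    set z := (1 - t) • vtx L j + t • vtx L (j + 1) with hz
    have hfz : f z = c := by
      rw [hz]
      simp only [map_add, map_smul, smul_eq_mul]
      exact hteq
    have hzedg : z ∈ edg L := by
      rw [edg]
      simp only [Set.mem_iUnion, Finset.mem_range]
      exact ⟨j, by omega, ⟨1 - t, t, by linarith, ht0.le, by ring, hz.symm⟩⟩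
    have hzfr : z ∈ frontier K := by rw [← hfrK]; exact hzedg
    have hzK : z ∈ K := hKcl.closure_eq ▸ frontier_subset_closure hzfr
    have hcolz : Collinear ℝ {vtx L j, z, vtx L (j + 1)} := by
      have hwb : Wbtw ℝ (vtx L j) z (vtx L (j + 1)) :=
        ⟨t, ⟨ht0.le, ht1.le⟩, by rw [AffineMap.lineMap_apply_module]⟩
      exact hwb.collinear
    have hzV0 : z ≠ vtx L 0 := by
      intro h
      refine hstrict 0 j (j + 1) (by omega) (by omega) (by omega) ?_
      refine Collinear.subset ?_ hcolz
      intro x hx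
      simp only [Set.mem_insert_iff, Set.mem_singleton_iff] at hx ⊢
      rcases hx with rfl | rfl | rfl
      · right; left; exact h.symm
      · left; rfl
      · right; right; rfl
    have hzVi : z ≠ vtx L i := by
      intro h
      rcases hjiord with hlt | hgt
      · refine hstrict j (j + 1) i (by omega) hlt (by omega) ?_
        refine Collinear.subset ?_ hcolz
        intro x hx
        simp only [Set.mem_insert_iff, Set.mem_singleton_iff] at hx ⊢
        rcases hx with rfl | rfl | rfl
        · left; rfl
        · right; right; rfl
        · right; left; exact h.symm
      · refine hstrict i j (j + 1) hgt (by omega) (by omega) ?_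
        refine Collinear.subset ?_ hcolz
        intro x hx
        simp only [Set.mem_insert_iff, Set.mem_singleton_iff] at hx ⊢
        rcases hx with rfl | rfl | rfl
        · right; left; exact h.symm
        · left; rfl
        · right; right; rfl
    have hzw : z ≠ w := by
      intro h
      rw [← closure_diff_interior] at hzfr
      exact hzfr.2 (by rw [h]; exact hwI)
    obtain ⟨p₀, v, hrep⟩ :=
      (collinear_iff_exists_forall_eq_smul_vadd _).mp (line_collinear f hf c)
    obtain ⟨t0, h0⟩ := hrep _ (show vtx L 0 ∈ {x : Pl | f x = c} from hfV0)
    obtain ⟨ti, hi'⟩ := hrep _ (show vtx L i ∈ {x : Pl | f x = c} from hfVi)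
    obtain ⟨tz, hz'⟩ := hrep _ (show z ∈ {x : Pl | f x = c} from hfz)
    obtain ⟨tw, hw'⟩ := hrep _ (show w ∈ {x : Pl | f x = c} from hfw)
    simp only [vadd_eq_add] at h0 hi' hz' hw'
    have hvne : v ≠ 0 := by
      intro h
      apply hV0Vi
      rw [h0, hi', h, smul_zero, smul_zero]
    have hparam_inj : ∀ s t : ℝ, s • v + p₀ = t • v + p₀ → s = t := by
      intro s t h
      have h2 : (s - t) • v = 0 := by linear_combination (norm := module) h
      rcases smul_eq_zero.mp h2 with h3 | h3
      · exact sub_eq_zero.mp h3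
      · exact absurd h3 hvne
    have ht0ti : t0 ≠ ti := fun h => hV0Vi (by rw [h0, hi', h])
    have htz0 : tz ≠ t0 := fun h => hzV0 (by rw [hz', h0, h])
    have htzi : tz ≠ ti := fun h => hzVi (by rw [hz', hi', h])
    have htzw : tz ≠ tw := fun h => hzw (by rw [hz', hw', h])
    rw [openSegment_eq_image] at hwO
    obtain ⟨u, hu, hwe⟩ := hwO
    have htw_eq : tw = (1 - u) * t0 + u * ti := by
      apply hparam_inj
      rw [← hw', ← hwe, h0, hi']
      module
    have hvtx_fr : ∀ jj, jj < n → vtx L jj ∈ frontier K := by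
      intro jj hjj
      rw [← hfrK, edg]
      simp only [Set.mem_iUnion, Finset.mem_range]
      exact ⟨jj, hjj, left_mem_segment ℝ _ _⟩
    have h0fr := hvtx_fr 0 (by omega)
    have hifr := hvtx_fr i (by omega)
    rw [h0] at h0fr
    rw [hi'] at hifr
    rw [hz'] at hzfr
    have hwI' : tw • v + p₀ ∈ interior K := by rw [← hw']; exact hwI
    have hu0 : (0 : ℝ) < u := hu.1
    have hu1 : u < 1 := hu.2
    rcases ht0ti.lt_or_gt with hlt | hlt
    · have hb1 : t0 < tw := by
        have h5 : tw - t0 = u * (ti - t0) := by rw [htw_eq]; ring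
        have h6 : (0 : ℝ) < u * (ti - t0) := mul_pos hu0 (sub_pos.mpr hlt)
        linarith
      have hb2 : tw < ti := by
        have h5 : ti - tw = (1 - u) * (ti - t0) := by rw [htw_eq]; ring
        have h6 : (0 : ℝ) < (1 - u) * (ti - t0) := mul_pos (by linarith) (sub_pos.mpr hlt)
        linarith
      exact final_step hKconv hKcl h0fr hifr hzfr hwI' hb1 hb2 htz0 htzi htzw
    · have hb1 : ti < tw := by
        have h5 : tw - ti = (1 - u) * (t0 - ti) := by rw [htw_eq]; ring
        have h6 : (0 : ℝ) < (1 - u) * (t0 - ti) := mul_pos (by linarith) (sub_pos.mpr hlt)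
        linarith
      have hb2 : tw < t0 := by
        have h5 : t0 - tw = u * (t0 - ti) := by rw [htw_eq]; ring
        have h6 : (0 : ℝ) < u * (t0 - ti) := mul_pos hu0 (sub_pos.mpr hlt)
        linarith
      exact final_step hKconv hKcl hifr h0fr hzfr hwI' hb1 hb2 htzi htz0 htzw
end
end

section
/- An ordinary polygon P = (V_0, …, V_{n-1}) in ℝ² is convex if and only if it is quasi-convex; that is, for a polygon with pairwise distinct vertices, edg P = ∂(conv P) if and only if edg P ⊆ ∂(conv P). -/
open Set

noncomputable section

namespace Stmt7Aux

def cx (p : Pl) : ℂ := ⟨p 0, p 1⟩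

lemma cx_re (p : Pl) : (cx p).re = p 0 := rfl
lemma cx_im (p : Pl) : (cx p).im = p 1 := rfl

lemma cx_inj {p q : Pl} (h : cx p = cx q) : p = q := by
  have h1 : p 0 = q 0 := congrArg Complex.re h
  have h2 : p 1 = q 1 := congrArg Complex.im h
  ext i
  fin_cases i <;> assumption

lemma continuous_cx : Continuous cx := by
  have h0 : Continuous fun p : Pl => p 0 := (EuclideanSpace.proj (0 : Fin 2)).continuous
  have h1 : Continuous fun p : Pl => p 1 := (EuclideanSpace.proj (1 : Fin 2)).continuous
  have : cx = fun p : Pl => ((p 0 : ℂ) + (p 1 : ℂ) * Complex.I) := by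
    funext p
    apply Complex.ext <;> simp [cx_re, cx_im]
  rw [this]
  exact (Complex.continuous_ofReal.comp h0).add
    ((Complex.continuous_ofReal.comp h1).mul continuous_const)

lemma cx_ratio {p q z : Pl} {s : ℝ} (h : cx p - cx z = (s : ℂ) * (cx q - cx z)) :
    p - z = s • (q - z) := by
  have hre := congrArg Complex.re h
  have him := congrArg Complex.im h
  simp [Complex.mul_re, Complex.mul_im, cx_re, cx_im] at hre him
  ext i
  fin_cases i
  · simp only [PiLp.sub_apply, PiLp.smul_apply, smul_eq_mul]; exact hre
  · simp only [PiLp.sub_apply, PiLp.smul_apply, smul_eq_mul]; exact him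

lemma cx_sub_ne {p q : Pl} (h : p ≠ q) : cx p - cx q ≠ 0 := by
  intro hc
  exact h (cx_inj (by linear_combination hc))

end Stmt7Aux

namespace Stmt7Aux

lemma ray_eq {S : Set Pl} (hconv : Convex ℝ S) {z y₁ y₂ : Pl}
    (hz : z ∈ interior S) (h1 : y₁ ∈ frontier S) (h2 : y₂ ∈ frontier S)
    {s : ℝ} (hs : 0 < s) (h : y₂ - z = s • (y₁ - z)) : y₁ = y₂ := by
  have hni : ∀ y : Pl, y ∈ frontier S → y ∉ interior S := by
    intro y hy hin
    exact hy.2 hin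
  rcases lt_trichotomy s 1 with hlt | heq | hgt
  · exfalso
    have hy2 : y₂ = (1 - s) • z + s • y₁ := by
      have : y₂ = z + (s • y₁ - s • z) := by rw [← smul_sub, ← h]; abel
      rw [this]; module
    have : y₂ ∈ interior S := by
      rw [hy2]
      exact hconv.combo_interior_closure_mem_interior hz
        (frontier_subset_closure h1) (by linarith) hs.le (by ring)
    exact hni _ h2 this
  · rw [heq, one_smul] at h
    exact (sub_left_injective h).symm
  · exfalso
    have hy1 : y₁ = (1 - s⁻¹) • z + s⁻¹ • y₂ := by
      have h' : y₁ - z = s⁻¹ • (y₂ - z) := by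
        rw [h, smul_smul, inv_mul_cancel₀ (by positivity), one_smul]
      have : y₁ = z + (s⁻¹ • y₂ - s⁻¹ • z) := by rw [← smul_sub, ← h']; abel
      rw [this]; module
    have : y₁ ∈ interior S := by
      rw [hy1]
      exact hconv.combo_interior_closure_mem_interior hz
        (frontier_subset_closure h2) (by rw [sub_pos]; exact inv_lt_one_of_one_lt₀ hgt)
        (by positivity) (by ring)
    exact hni _ h1 this

end Stmt7Aux


namespace Stmt7Aux

variable {L : List Pl}

lemma vtx_mod (L : List Pl) (j : ℕ) : vtx L (j % L.length) = vtx L j := by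
  simp [vtx, Nat.mod_mod_of_dvd _ dvd_rfl]

lemma vtx_eq_get (h : 0 < L.length) (j : ℕ) :
    vtx L j = L[j % L.length]'(Nat.mod_lt _ h) := by
  rw [vtx]
  exact List.getD_eq_getElem _ _ (Nat.mod_lt _ h)

lemma seg_subset_edg (h : 0 < L.length) (i : ℕ) :
    segment ℝ (vtx L i) (vtx L (i + 1)) ⊆ edg L := by
  have h1 : vtx L (i % L.length) = vtx L i := vtx_mod L i
  have h2 : vtx L (i % L.length + 1) = vtx L (i + 1) := by
    have : (i % L.length + 1) % L.length = (i + 1) % L.length := Nat.mod_add_mod i L.length 1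
    simp only [vtx, this]
  intro p hp
  apply Set.mem_biUnion (show i % L.length ∈ Finset.range L.length by
    simpa using Nat.mod_lt _ h)
  rw [h1, h2]
  exact hp

lemma vtx_mem_edg (h : 0 < L.length) (i : ℕ) : vtx L i ∈ edg L :=
  seg_subset_edg h i (left_mem_segment ℝ _ _)

lemma vtx_mem_vertexSet (h : 0 < L.length) (i : ℕ) : vtx L i ∈ vertexSet L := by
  rw [vtx_eq_get h]
  exact List.getElem_mem _

lemma edg_subset_hull : edg L ⊆ convexHull ℝ (vertexSet L) := by
  rcases Nat.eq_zero_or_pos L.length with h0 | h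
  · simp [edg, h0]
  · intro p hp
    simp only [edg, Set.mem_iUnion] at hp
    obtain ⟨i, _, hp⟩ := hp
    exact segment_subset_convexHull (vtx_mem_vertexSet h i) (vtx_mem_vertexSet h (i+1)) hp

end Stmt7Aux

namespace Stmt7Aux

lemma chain_preconnected (T : ℕ → ℝ) (m : ℕ) :
    IsPreconnected (⋃ i ∈ Finset.range m, uIcc (T i) (T (i + 1))) := by
  induction m with
  | zero =>
    simp only [Finset.range_zero, Finset.notMem_empty, Set.iUnion_of_empty, Set.iUnion_empty]
    exact isPreconnected_empty
  | succ m ih =>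
    rw [Finset.range_add_one, Finset.set_biUnion_insert]
    rcases Nat.eq_zero_or_pos m with h0 | hm
    · subst h0
      simpa using isPreconnected_uIcc
    · apply IsPreconnected.union (T m)
      · exact left_mem_uIcc
      · apply Set.mem_biUnion (show m - 1 ∈ Finset.range m by simpa using Nat.sub_lt hm one_pos)
        have : m - 1 + 1 = m := Nat.succ_pred_eq_of_pos hm
        rw [this]
        exact right_mem_uIcc
      · exact isPreconnected_uIcc
      · exact ih

lemma degenerate (L : List Pl) (hL : affineSpan ℝ (vertexSet L) ≠ ⊤) :
    convexHull ℝ (vertexSet L) ⊆ edg L := by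
  rcases Nat.eq_zero_or_pos L.length with h0 | hn
  · have hnil : L = [] := List.length_eq_zero_iff.mp h0
    subst hnil
    have : vertexSet ([] : List Pl) = (∅ : Set Pl) := by
      ext p; simp [vertexSet]
    rw [this, convexHull_empty]
    exact Set.empty_subset _
  · intro x hx
    set s := affineSpan ℝ (vertexSet L) with hs
    have hv0 : vtx L 0 ∈ vertexSet L := vtx_mem_vertexSet hn 0
    have hsne : (s : Set Pl).Nonempty := ⟨vtx L 0, subset_affineSpan ℝ _ hv0⟩
    have hdir : s.direction ≠ ⊤ := by
      intro h
      exact hL ((AffineSubspace.direction_eq_top_iff_of_nonempty hsne).mp h)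
    -- a vector d spanning (a superset of) the direction
    obtain ⟨d, hd0, hDle⟩ : ∃ d : Pl, d ≠ 0 ∧ s.direction ≤ ℝ ∙ d := by
      by_cases hbot : s.direction = ⊥
      · refine ⟨EuclideanSpace.single (0 : Fin 2) (1 : ℝ), ?_, hbot ▸ bot_le⟩
        intro h
        have h1 : (1 : ℝ) = 0 := by
          calc (1 : ℝ) = EuclideanSpace.single (0 : Fin 2) (1 : ℝ) 0 := by simp
          _ = (0 : Pl) 0 := by rw [h]
          _ = 0 := rfl
        exact one_ne_zero h1
      · obtain ⟨d, hdmem, hd0⟩ := Submodule.exists_mem_ne_zero_of_ne_bot hbot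
        refine ⟨d, hd0, ?_⟩
        have hle : (ℝ ∙ d) ≤ s.direction := (Submodule.span_singleton_le_iff_mem _ _).mpr hdmem
        have heq : (ℝ ∙ d) = s.direction := by
          apply Submodule.eq_of_le_of_finrank_le hle
          have h1 : Module.finrank ℝ (ℝ ∙ d) = 1 := finrank_span_singleton hd0
          have h2 : Module.finrank ℝ s.direction < 2 := by
            have := Submodule.finrank_lt (s := s.direction) hdir
            rwa [finrank_euclideanSpace_fin] at this
          omega
        exact heq.ge
    set ψ : Pl →ₗ[ℝ] ℝ := (innerSL ℝ d).toLinearMap with hψ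
    have hinj : ∀ p ∈ s, ∀ q ∈ s, ψ p = ψ q → p = q := by
      intro p hp q hq hpq
      have hsub : p - q ∈ s.direction := AffineSubspace.vsub_mem_direction hp hq
      obtain ⟨c, hc⟩ := Submodule.mem_span_singleton.mp (hDle hsub)
      have hz : ψ (p - q) = 0 := by rw [map_sub, hpq, sub_self]
      rw [← hc] at hz
      have : c * inner ℝ d d = (0 : ℝ) := by
        simpa [hψ, real_inner_smul_right] using hz
      have hc0 : c = 0 := by
        rcases mul_eq_zero.mp this with h | h
        · exact h
        · exact absurd h (inner_self_ne_zero.mpr hd0)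
      have : p - q = 0 := by rw [← hc, hc0, zero_smul]
      exact sub_eq_zero.mp this
    set T : ℕ → ℝ := fun i => ψ (vtx L i) with hT
    have hYconv : Convex ℝ (⋃ i ∈ Finset.range L.length, uIcc (T i) (T (i + 1))) := by
      rw [convex_iff_ordConnected]
      exact (chain_preconnected T L.length).ordConnected
    have himg : ψ x ∈ ⋃ i ∈ Finset.range L.length, uIcc (T i) (T (i + 1)) := by
      have h1 : ψ x ∈ convexHull ℝ (ψ '' vertexSet L) := by
        rw [← ψ.image_convexHull]
        exact ⟨x, hx, rfl⟩
      refine convexHull_min ?_ hYconv h1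
      rintro - ⟨p, hp, rfl⟩
      obtain ⟨j, hj⟩ := List.mem_iff_get.mp hp
      apply Set.mem_biUnion (show (j : ℕ) ∈ Finset.range L.length by simpa using j.isLt)
      have : vtx L j = p := by
        rw [vtx_eq_get hn, ← hj]
        simp [List.get_eq_getElem, Nat.mod_eq_of_lt j.isLt]
      rw [hT, ← this]
      exact left_mem_uIcc
    simp only [Set.mem_iUnion] at himg
    obtain ⟨i, hi, himem⟩ := himg
    have hseg : ψ '' segment ℝ (vtx L i) (vtx L (i + 1)) = uIcc (T i) (T (i + 1)) := by
      rw [← segment_eq_uIcc]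
      exact image_segment ℝ ψ.toAffineMap _ _
    rw [← hseg] at himem
    obtain ⟨p, hpseg, hpx⟩ := himem
    have hpedg : p ∈ edg L := seg_subset_edg hn i hpseg
    have hps : p ∈ s := by
      have : segment ℝ (vtx L i) (vtx L (i + 1)) ⊆ (s : Set Pl) :=
        (AffineSubspace.convex s).segment_subset
          (subset_affineSpan ℝ _ (vtx_mem_vertexSet hn i))
          (subset_affineSpan ℝ _ (vtx_mem_vertexSet hn (i + 1)))
      exact this hpseg
    have hxs : x ∈ s := convexHull_subset_affineSpan _ hx
    rw [hinj p hps x hxs hpx]  at hpedg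
    exact hpedg

end Stmt7Aux

namespace Stmt7Aux

lemma vtx_coe {L : List Pl} (h : 0 < L.length) (j : Fin L.length) : vtx L j = L.get j := by
  rw [vtx_eq_get h]
  simp [List.get_eq_getElem, Nat.mod_eq_of_lt j.isLt]

lemma main_case (L : List Pl) (hord : L.Nodup)
    (hq : edg L ⊆ frontier (convexHull ℝ (vertexSet L)))
    (htop : affineSpan ℝ (vertexSet L) = ⊤) :
    frontier (convexHull ℝ (vertexSet L)) ⊆ edg L := by
  intro x hx
  by_contra hxe
  set V : Set Pl := vertexSet L with hV
  set K : Set Pl := convexHull ℝ V with hK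
  have hVfin : V.Finite := L.finite_toSet
  have hKconv : Convex ℝ K := convex_convexHull ℝ V
  have hKcomp : IsCompact K := (hVfin.isCompact_convexHull ℝ)
  have hKcl : IsClosed K := hKcomp.isClosed
  have hzex : (interior K).Nonempty := by
    rw [hKconv.interior_nonempty_iff_affineSpan_eq_top, hK, affineSpan_convexHull]
    exact htop
  obtain ⟨z, hz⟩ := hzex
  have hnotint : ∀ y ∈ frontier K, y ∉ interior K := by
    intro y hy hyi
    exact hy.2 hyi
  have hxK : x ∈ K := hKcl.frontier_subset hx
  have hzx : x ≠ z := fun h => hnotint x hx (h ▸ hz)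
  have hn : 0 < L.length := by
    rcases Nat.eq_zero_or_pos L.length with h0 | h
    · exfalso
      have : L = [] := List.length_eq_zero_iff.mp h0
      subst this
      have hVempty : V = (∅ : Set Pl) := by ext p; simp [hV, vertexSet]
      rw [hK, hVempty, convexHull_empty] at hxK
      exact hxK
    · exact h
  set n := L.length with hnn
  -- vertices lie on edg
  have hVedg : V ⊆ edg L := by
    intro p hp
    obtain ⟨j, hj⟩ := List.mem_iff_get.mp hp
    have := vtx_mem_edg hn (j : ℕ)
    rwa [vtx_coe hn, hj] at this
  -- the angle function
  set u : Pl → ℝ := fun y => Complex.arg (-(cx y - cx z) / (cx x - cx z)) with hu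
  have hden : cx x - cx z ≠ 0 := cx_sub_ne hzx
  have hfr_ne_z : ∀ y ∈ frontier K, y ≠ z := fun y hy h => hnotint y hy (h ▸ hz)
  -- injectivity of u on the frontier minus x
  have hinj : ∀ y₁ ∈ frontier K, ∀ y₂ ∈ frontier K, y₁ ≠ x → y₂ ≠ x →
      u y₁ = u y₂ → y₁ = y₂ := by
    intro y₁ h₁ y₂ h₂ hx1 hx2 huv
    have hne1 : cx y₁ - cx z ≠ 0 := cx_sub_ne (hfr_ne_z _ h₁)
    have hne2 : cx y₂ - cx z ≠ 0 := cx_sub_ne (hfr_ne_z _ h₂)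
    set w₁ : ℂ := -(cx y₁ - cx z) / (cx x - cx z) with hw₁
    set w₂ : ℂ := -(cx y₂ - cx z) / (cx x - cx z) with hw₂
    have hw1ne : w₁ ≠ 0 := div_ne_zero (neg_ne_zero.mpr hne1) hden
    have hw2ne : w₂ ≠ 0 := div_ne_zero (neg_ne_zero.mpr hne2) hden
    have habs1 : ‖w₁‖ ≠ 0 := norm_ne_zero_iff.mpr hw1ne
    have habs2 : (0:ℝ) < ‖w₂‖ := norm_pos_iff.mpr hw2ne
    have e₁ := Complex.norm_mul_exp_arg_mul_I w₁
    have e₂ := Complex.norm_mul_exp_arg_mul_I w₂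
    have harg : w₁.arg = w₂.arg := huv
    set s : ℝ := ‖w₂‖ / ‖w₁‖ with hsdef
    have hs : 0 < s := div_pos habs2 (lt_of_le_of_ne (norm_nonneg _) (Ne.symm habs1))
    have habsrel : s * ‖w₁‖ = ‖w₂‖ := div_mul_cancel₀ _ habs1
    have hrel : w₂ = (s : ℂ) * w₁ := by
      calc w₂ = (‖w₂‖ : ℂ) * Complex.exp (w₂.arg * Complex.I) := e₂.symm
        _ = ((s : ℂ) * (‖w₁‖ : ℂ)) * Complex.exp (w₁.arg * Complex.I) := by
            rw [harg, ← habsrel]; push_cast; ring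
        _ = (s : ℂ) * w₁ := by rw [mul_assoc, e₁]
    have hA : cx y₂ - cx z = (s : ℂ) * (cx y₁ - cx z) := by
      have h2' : w₂ * (cx x - cx z) = -(cx y₂ - cx z) := by rw [hw₂]; field_simp
      have h1' : w₁ * (cx x - cx z) = -(cx y₁ - cx z) := by rw [hw₁]; field_simp
      have hm : (s : ℂ) * (w₁ * (cx x - cx z)) = w₂ * (cx x - cx z) := by rw [hrel]; ring
      rw [h1', h2'] at hm
      linear_combination hm
    have := cx_ratio hA
    exact ray_eq hKconv hz h₁ h₂ hs this
  -- continuity of u on the edges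
  have hcont : ∀ p ∈ edg L, ContinuousAt u p := by
    intro p hp
    have hpfr := hq hp
    have hpz : p ≠ z := hfr_ne_z _ hpfr
    have hgc : Continuous fun y : Pl => -(cx y - cx z) / (cx x - cx z) :=
      ((continuous_cx.sub continuous_const).neg).div_const _
    have hslit : -(cx p - cx z) / (cx x - cx z) ∈ Complex.slitPlane := by
      by_contra hns
      rw [Complex.mem_slitPlane_iff] at hns
      push_neg at hns
      obtain ⟨hre, him⟩ := hns
      set w : ℂ := (cx p - cx z) / (cx x - cx z) with hw
      have hrw : -(cx p - cx z) / (cx x - cx z) = -w := by rw [hw, neg_div]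
      rw [hrw] at hre him
      have hwre : 0 ≤ w.re := by simpa using hre
      have hwim : w.im = 0 := by simpa using him
      have hw0 : w ≠ 0 := div_ne_zero (cx_sub_ne hpz) hden
      have hwpos : 0 < w.re := by
        rcases hwre.lt_or_eq with h | h
        · exact h
        · exact absurd (Complex.ext h.symm hwim) hw0
      have hwr : w = ((w.re : ℝ) : ℂ) := Complex.ext rfl (by simpa using hwim)
      have hkey : cx p - cx z = ((w.re : ℝ) : ℂ) * (cx x - cx z) := by
        rw [← hwr, hw]
        field_simp
      have hray := cx_ratio hkey
      have : x = p := ray_eq hKconv hz hx hpfr hwpos hray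
      exact hxe (this ▸ hp)
    exact ContinuousAt.comp (f := fun y : Pl => -(cx y - cx z) / (cx x - cx z))
      (Complex.continuousAt_arg hslit) hgc.continuousAt
  -- three distinct extreme points
  set W : Set Pl := Set.extremePoints ℝ K with hW
  have hWV : W ⊆ V := extremePoints_convexHull_subset
  have hWfr : ∀ w ∈ W, w ∈ frontier K ∧ w ≠ x := by
    intro w hw
    have hwedg : w ∈ edg L := hVedg (hWV hw)
    exact ⟨hq hwedg, fun h => hxe (h ▸ hwedg)⟩
  have hKM : closure (convexHull ℝ W) = K := closure_convexHull_extremePoints hKcomp hKconv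
  have hpair : ∀ a b : Pl, ¬ (W ⊆ {a, b}) := by
    intro a b hsub
    have h1 : K ⊆ segment ℝ a b := by
      rw [← hKM, ← convexHull_pair]
      have hcl : IsClosed (convexHull ℝ ({a, b} : Set Pl)) :=
        (((Set.finite_singleton b).insert a).isCompact_convexHull ℝ).isClosed
      rw [← hcl.closure_eq]
      exact closure_mono (convexHull_mono hsub)
    have h2 : V ⊆ (affineSpan ℝ ({a, b} : Set Pl) : Set Pl) := by
      intro p hp
      have hseg : p ∈ segment ℝ a b := h1 (subset_convexHull ℝ V hp)
      rw [← convexHull_pair] at hseg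
      exact convexHull_subset_affineSpan _ hseg
    have h3 : affineSpan ℝ ({a, b} : Set Pl) = ⊤ := by
      have := affineSpan_le.mpr h2
      rw [htop] at this
      exact top_le_iff.mp this
    have h4 : vectorSpan ℝ ({a, b} : Set Pl) = ⊤ := by
      rw [← direction_affineSpan, h3, AffineSubspace.direction_top]
    have h5 : Module.finrank ℝ (vectorSpan ℝ ({a, b} : Set Pl)) ≤ 1 := by
      rw [vectorSpan_pair]
      by_cases hab : a -ᵥ b = 0
      · rw [hab, Submodule.span_zero_singleton]
        simp
      · rw [finrank_span_singleton hab]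
    rw [h4, finrank_top, finrank_euclideanSpace_fin] at h5
    omega
  obtain ⟨E₁, h1, E₂, h2, E₃, h3, h12, h13, h23⟩ :
      ∃ E₁ ∈ W, ∃ E₂ ∈ W, ∃ E₃ ∈ W, E₁ ≠ E₂ ∧ E₁ ≠ E₃ ∧ E₂ ≠ E₃ := by
    by_contra hcon
    push_neg at hcon
    have hWne : W.Nonempty := by
      rcases W.eq_empty_or_nonempty with h | h
      · exact absurd (by rw [h]; exact Set.empty_subset _) (hpair 0 0)
      · exact h
    obtain ⟨w₁, hw₁⟩ := hWne
    by_cases hW2 : ∃ w₂ ∈ W, w₂ ≠ w₁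
    · obtain ⟨w₂, hw₂, hne⟩ := hW2
      apply hpair w₁ w₂
      intro w hw
      by_cases hA : w = w₁
      · exact Or.inl hA
      · by_cases hB : w = w₂
        · exact Or.inr hB
        · exact absurd (hcon w₁ hw₁ w₂ hw₂ w hw hne.symm (Ne.symm hA)) (Ne.symm hB)
    · push_neg at hW2
      apply hpair w₁ w₁
      intro w hw
      exact Or.inl (hW2 w hw)
  -- sort by u-value
  have hud : ∀ w ∈ W, ∀ w' ∈ W, w ≠ w' → u w ≠ u w' := by
    intro w hw w' hw' hne hu'
    obtain ⟨hf, hxne⟩ := hWfr w hw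
    obtain ⟨hf', hxne'⟩ := hWfr w' hw'
    exact hne (hinj w hf w' hf' hxne hxne' hu')
  obtain ⟨P, hP, E, hE, Q, hQ, hPE, hEQ⟩ :
      ∃ P ∈ W, ∃ E ∈ W, ∃ Q ∈ W, u P < u E ∧ u E < u Q := by
    have d12 := (hud E₁ h1 E₂ h2 h12).lt_or_gt
    have d13 := (hud E₁ h1 E₃ h3 h13).lt_or_gt
    have d23 := (hud E₂ h2 E₃ h3 h23).lt_or_gt
    rcases d12 with a | a <;> rcases d13 with b | b <;> rcases d23 with c | c
    · exact ⟨E₁, h1, E₂, h2, E₃, h3, a, c⟩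
    · exact ⟨E₁, h1, E₃, h3, E₂, h2, b, c⟩
    · exact absurd a (by intro _; linarith)
    · exact ⟨E₃, h3, E₁, h1, E₂, h2, b, a⟩
    · exact ⟨E₂, h2, E₁, h1, E₃, h3, a, b⟩
    · exact absurd a (by intro _; linarith)
    · exact ⟨E₂, h2, E₃, h3, E₁, h1, c, b⟩
    · exact ⟨E₃, h3, E₂, h2, E₁, h1, c, a⟩
  -- index of E
  obtain ⟨kf, hkf⟩ := List.mem_iff_get.mp (hWV hE)
  set k : ℕ := (kf : ℕ) with hkdef
  have hkn : k < n := kf.isLt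
  have hvk : vtx L k = E := by rw [vtx_coe hn kf, hkf]
  have hEfrx := hWfr E hE
  -- vertices at indices other than k are not E
  have hvtx_ne : ∀ i : ℕ, i % n ≠ k → vtx L i ≠ E := by
    intro i hik hEq
    apply hik
    rw [vtx_eq_get hn] at hEq
    have hkE : L[k]'hkn = E := by
      rw [← hkf]; simp [List.get_eq_getElem, hkdef]
    rw [← hkE] at hEq
    exact (hord.getElem_inj_iff).mp hEq
  -- no edge avoiding E crosses the level u E
  have hedge : ∀ A B : Pl, segment ℝ A B ⊆ edg L → A ∈ K → B ∈ K → A ≠ E → B ≠ E →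
      ¬(u A < u E ∧ u E < u B) := by
    rintro A B hsub hAK hBK hAE hBE ⟨ha, hb⟩
    have hcontOn : ContinuousOn u (segment ℝ A B) := fun p hp =>
      (hcont p (hsub hp)).continuousWithinAt
    have hivt := (convex_segment A B).isPreconnected.intermediate_value
      (left_mem_segment ℝ A B) (right_mem_segment ℝ A B) hcontOn
    obtain ⟨p, hpseg, hpE⟩ := hivt ⟨ha.le, hb.le⟩
    have hpfr := hq (hsub hpseg)
    have hpx : p ≠ x := fun h => hxe (h ▸ hsub hpseg)
    have hpeq : p = E := hinj p hpfr E hEfrx.1 hpx hEfrx.2 hpE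
    rw [hpeq] at hpseg
    rw [← insert_endpoints_openSegment] at hpseg
    rcases hpseg with h | h | h
    · exact hAE h.symm
    · exact hBE h.symm
    · exact hAE ((mem_extremePoints.mp hE).2 A hAK B hBK h).1
  -- the edge lemma
  have hEL : ∀ i : ℕ, i % n ≠ k → (i + 1) % n ≠ k →
      (u (vtx L i) < u E ↔ u (vtx L (i + 1)) < u E) := by
    intro i hi hi1
    set A := vtx L i with hA
    set B := vtx L (i + 1) with hB
    have hsub : segment ℝ A B ⊆ edg L := seg_subset_edg hn i
    have hAK : A ∈ K := subset_convexHull ℝ V (vtx_mem_vertexSet hn i)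
    have hBK : B ∈ K := subset_convexHull ℝ V (vtx_mem_vertexSet hn (i + 1))
    have hAE : A ≠ E := hvtx_ne i hi
    have hBE : B ≠ E := hvtx_ne (i + 1) hi1
    have hAfr : A ∈ frontier K := hq (vtx_mem_edg hn i)
    have hBfr : B ∈ frontier K := hq (vtx_mem_edg hn (i + 1))
    have hAx : A ≠ x := fun h => hxe (h ▸ vtx_mem_edg hn i)
    have hBx : B ≠ x := fun h => hxe (h ▸ vtx_mem_edg hn (i + 1))
    have hAu : u A ≠ u E := fun h => hAE (hinj A hAfr E hEfrx.1 hAx hEfrx.2 h)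
    have hBu : u B ≠ u E := fun h => hBE (hinj B hBfr E hEfrx.1 hBx hEfrx.2 h)
    have n1 := hedge A B hsub hAK hBK hAE hBE
    have n2 := hedge B A (by rw [segment_symm]; exact hsub) hBK hAK hBE hAE
    constructor
    · intro h
      by_contra h'
      exact n1 ⟨h, lt_of_le_of_ne (not_lt.mp h') (Ne.symm hBu)⟩
    · intro h
      by_contra h'
      exact n2 ⟨h, lt_of_le_of_ne (not_lt.mp h') (Ne.symm hAu)⟩
  -- walking along the cycle avoiding k
  have hwalk : ∀ d i : ℕ, (∀ t, t ≤ d → (i + t) % n ≠ k) →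
      (u (vtx L i) < u E ↔ u (vtx L (i + d)) < u E) := by
    intro d
    induction d with
    | zero => intro i _; rfl
    | succ d ih =>
      intro i hcond
      have h1 := ih i (fun t ht => hcond t (ht.trans (Nat.le_succ d)))
      have hc1 : (i + d) % n ≠ k := by
        have := hcond d (Nat.le_succ d)
        exact this
      have hc2 : (i + d + 1) % n ≠ k := by
        have := hcond (d + 1) le_rfl
        rwa [← Nat.add_assoc] at this
      have h2 := hEL (i + d) hc1 hc2
      rw [h1, h2, Nat.add_assoc]
  -- every non-k index is connected to k+1
  have hstep : ∀ j : ℕ, j < n → j ≠ k →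
      (u (vtx L (k + 1)) < u E ↔ u (vtx L j) < u E) := by
    intro j hj hjk
    set d : ℕ := (j + n - (k + 1)) % n with hd
    have hk1n : k + 1 ≤ n := hkn
    have hdlt : d < n := Nat.mod_lt _ hn
    have hdj : (k + 1 + d) % n = j := by
      rw [hd, Nat.add_mod_mod, Nat.add_sub_cancel' (by omega : k + 1 ≤ j + n),
        Nat.add_mod_right, Nat.mod_eq_of_lt hj]
    have hcond : ∀ t, t ≤ d → (k + 1 + t) % n ≠ k := by
      intro t ht hkt
      have hmeq : k ≡ k + 1 + t [MOD n] := by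
        unfold Nat.ModEq
        rw [hkt, Nat.mod_eq_of_lt hkn]
      have h1 : n ∣ t + 1 := by
        have := (Nat.modEq_iff_dvd' (by omega : k ≤ k + 1 + t)).mp hmeq
        have heq : k + 1 + t - k = t + 1 := by omega
        rwa [heq] at this
      have h2 : n ≤ t + 1 := Nat.le_of_dvd (by omega) h1
      have ht1 : t = n - 1 := by omega
      have hdt : d = t := by omega
      apply hjk
      rw [← hdj, hdt, hkt]
    have hw := hwalk d (k + 1) hcond
    have hvd : vtx L (k + 1 + d) = vtx L j := by
      rw [← vtx_mod L (k + 1 + d), hdj]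
    rwa [hvd] at hw
  -- indices for P and Q
  obtain ⟨af, haf⟩ := List.mem_iff_get.mp (hWV hP)
  obtain ⟨bf, hbf⟩ := List.mem_iff_get.mp (hWV hQ)
  have hva : vtx L (af : ℕ) = P := by rw [vtx_coe hn af, haf]
  have hvb : vtx L (bf : ℕ) = Q := by rw [vtx_coe hn bf, hbf]
  have hPEne : P ≠ E := fun h => absurd (congrArg u h) (ne_of_lt hPE)
  have hQEne : Q ≠ E := fun h => absurd (congrArg u h) (ne_of_gt hEQ)
  have hak : (af : ℕ) ≠ k := by
    intro h
    apply hPEne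
    rw [← hva, ← hvk, h]
  have hbk : (bf : ℕ) ≠ k := by
    intro h
    apply hQEne
    rw [← hvb, ← hvk, h]
  have hstepa := hstep (af : ℕ) af.isLt hak
  have hstepb := hstep (bf : ℕ) bf.isLt hbk
  rw [hva] at hstepa
  rw [hvb] at hstepb
  exact absurd (hstepb.mp (hstepa.mpr hPE)) (not_lt.mpr hEQ.le)

end Stmt7Aux

/-- an ordinary polygon is convex iff it is quasi-convex. -/
theorem stmt_7 (L : List Pl) (hord : L.Nodup) :
    IsConvexPolygon L ↔ IsQuasiConvex L := by
  constructor
  · intro h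
    exact le_of_eq h
  · intro hq
    apply subset_antisymm hq
    by_cases htop : affineSpan ℝ (vertexSet L) = ⊤
    · exact Stmt7Aux.main_case L hord hq htop
    · intro y hy
      have hK : IsClosed (convexHull ℝ (vertexSet L)) :=
        ((List.finite_toSet L).isCompact_convexHull ℝ).isClosed
      exact Stmt7Aux.degenerate L htop (hK.frontier_subset hy)
end
end

section
/- Let P = (V_0, …, V_{n-1}) be a convex polygon in ℝ², let Π := conv P, and let ℓ be a line with ℓ ∩ int Π ≠ ∅. Then ℓ ∩ edg P = {X, Y} for two distinct points X and Y such that X ∈ [V_i, V_{i+1}) and Y ∈ [V_j, V_{j+1}) for some i, j ∈ {0, …, n-1} with i < j; here [A, B) := {(1-t)A + tB : 0 ≤ t < 1} if A ≠ B and [A, B) := ∅ if A = B. -/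
open Set

noncomputable section

lemma vtx_mod (L : List Pl) (j : ℕ) : vtx L (j % L.length) = vtx L j := by
  unfold vtx
  rw [Nat.mod_mod_of_dvd _ dvd_rfl]

lemma vtx_mod_succ (L : List Pl) (j : ℕ) :
    vtx L (j % L.length + 1) = vtx L (j + 1) := by
  unfold vtx
  rw [Nat.mod_add_mod]

lemma vtx_mul_add (L : List Pl) (m s : ℕ) : vtx L (L.length * m + s) = vtx L s := by
  unfold vtx
  rw [Nat.mul_add_mod]

/-- If `X` is a vertex and not all vertices are equal to `X`, then `X` lies on a
half-open edge. -/
lemma exists_hseg_vtx (L : List Pl) (k : ℕ)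
    (hne : ∃ s, s < L.length ∧ vtx L s ≠ vtx L k) :
    ∃ m, m < L.length ∧ vtx L k ∈ hseg (vtx L m) (vtx L (m + 1)) := by
  obtain ⟨s, hs, hsne⟩ := hne
  have hn : 0 < L.length := lt_of_le_of_lt (Nat.zero_le s) hs
  set n := L.length with hn_def
  set X := vtx L k with hX_def
  -- there is some positive r with vtx (k+r) ≠ X
  have hex : ∃ r, 0 < r ∧ vtx L (k + r) ≠ X := by
    refine ⟨s + n - k % n, ?_, ?_⟩
    · have : k % n < n := Nat.mod_lt _ hn
      omega
    · have hkeq : k + (s + n - k % n) = n * (k / n + 1) + s := by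
        have h1 : k % n + n * (k / n) = k := Nat.mod_add_div k n
        have h2 : k % n < n := Nat.mod_lt _ hn
        have h3 : n * (k / n + 1) = n * (k / n) + n := Nat.mul_succ n _
        omega
      rw [hkeq, vtx_mul_add]
      exact hsne
  classical
  -- minimal positive r with vtx (k+r) ≠ X
  let Q : ℕ → Prop := fun r => 0 < r ∧ vtx L (k + r) ≠ X
  have hQ : ∃ r, Q r := hex
  set r := Nat.find hQ with hr_def
  have hQr : Q r := Nat.find_spec hQ
  have hrpos : 0 < r := hQr.1
  have hprev : vtx L (k + (r - 1)) = X := by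
    rcases Nat.eq_or_lt_of_le hrpos with h1 | h1
    · simp [← h1, ← hX_def]
    · have : ¬ Q (r - 1) := Nat.find_min hQ (by omega)
      simp only [Q, not_and_or, not_not] at this
      rcases this with h | h
      · omega
      · exact h
  refine ⟨(k + (r - 1)) % n, Nat.mod_lt _ hn, ?_⟩
  have h1 : vtx L ((k + (r - 1)) % n) = X := by rw [vtx_mod]; exact hprev
  have h2 : vtx L ((k + (r - 1)) % n + 1) = vtx L (k + r) := by
    rw [vtx_mod_succ, Nat.add_assoc, Nat.sub_add_cancel hrpos]
  refine ⟨?_, 0, le_refl _, zero_lt_one, ?_⟩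
  · rw [h1, h2]; exact fun h => hQr.2 h.symm
  · rw [h1]; simp

/-- Any point of `edg L` on which not all vertices sit lies on a half-open edge. -/
lemma exists_hseg (L : List Pl) (X : Pl) (hX : X ∈ edg L)
    (hne : ∃ s, s < L.length ∧ vtx L s ≠ X) :
    ∃ m, m < L.length ∧ X ∈ hseg (vtx L m) (vtx L (m + 1)) := by
  simp only [edg, mem_iUnion, Finset.mem_range] at hX
  obtain ⟨i, hi, hXi⟩ := hX
  rw [segment_eq_image] at hXi
  obtain ⟨t, ht, hXt0⟩ := hXi
  have hXt : (1 - t) • vtx L i + t • vtx L (i + 1) = X := hXt0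
  by_cases hdeg : vtx L i = vtx L (i + 1)
  · -- degenerate edge: X is the vertex `vtx L i`
    have hXv : X = vtx L i := by
      rw [← hXt, ← hdeg]
      module
    obtain ⟨m, hm, hmem⟩ := exists_hseg_vtx L i (by rw [← hXv]; exact hne)
    exact ⟨m, hm, by rwa [← hXv] at hmem⟩
  · rcases lt_or_eq_of_le ht.2 with h1 | h1
    · -- X in the half-open part of edge i
      refine ⟨i % L.length, Nat.mod_lt _ (lt_of_le_of_lt (Nat.zero_le i) hi), ?_⟩
      rw [vtx_mod, vtx_mod_succ]
      exact ⟨hdeg, t, ht.1, h1, hXt.symm⟩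
    · -- X = vtx L (i+1), a vertex
      have hXv : X = vtx L (i + 1) := by rw [← hXt, h1]; module
      obtain ⟨m, hm, hmem⟩ := exists_hseg_vtx L (i + 1) (by rw [← hXv]; exact hne)
      exact ⟨m, hm, by rwa [← hXv] at hmem⟩

lemma hseg_subset_segment (A B : Pl) : hseg A B ⊆ segment ℝ A B := by
  rintro x ⟨-, t, ht0, ht1, rfl⟩
  rw [segment_eq_image]
  exact ⟨t, ⟨ht0, le_of_lt ht1⟩, rfl⟩

/-- a line through the interior of the convex hull of a convex polygon
meets the union of the edges in exactly two distinct points, lying on half-open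
edges `[V_i, V_{i+1})` and `[V_j, V_{j+1})` with `i < j`. -/
theorem stmt_10 (L : List Pl) (hconv : IsConvexPolygon L) (ℓ : Set Pl)
    (hline : IsLine ℓ)
    (hint : (ℓ ∩ interior (convexHull ℝ (vertexSet L))).Nonempty) :
    ∃ X Y : Pl, ∃ i j : ℕ, X ≠ Y ∧ ℓ ∩ edg L = {X, Y} ∧
      i < j ∧ j < L.length ∧
      X ∈ hseg (vtx L i) (vtx L (i + 1)) ∧
      Y ∈ hseg (vtx L j) (vtx L (j + 1)) := by
  classical
  obtain ⟨f, c, hf0, hℓ⟩ := hline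
  obtain ⟨p₀, hp₀ℓ, hp₀int⟩ := hint
  set K : Set Pl := convexHull ℝ (vertexSet L) with hK
  have hconv' : edg L = frontier K := hconv
  have hfin : (vertexSet L).Finite := L.finite_toSet
  have hKcpt : IsCompact K := hfin.isCompact_convexHull ℝ
  have hKconv : Convex ℝ K := convex_convexHull ℝ _
  have hKcl : IsClosed K := hKcpt.isClosed
  have hfr : frontier K = K \ interior K := hKcl.frontier_eq
  -- a direction vector for the line
  have hPl2 : Module.finrank ℝ Pl = 2 := by
    simp [finrank_euclideanSpace]
  have hsurj : Function.Surjective f := by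
    obtain ⟨v, hv⟩ := DFunLike.ne_iff.mp hf0
    simp only [LinearMap.zero_apply] at hv
    intro y
    refine ⟨(y / f v) • v, ?_⟩
    rw [map_smul, smul_eq_mul]
    field_simp
  have hker1 : Module.finrank ℝ (LinearMap.ker f) = 1 := by
    have h := LinearMap.finrank_range_add_finrank_ker f
    rw [hPl2, LinearMap.range_eq_top.mpr hsurj, finrank_top, Module.finrank_self] at h
    omega
  obtain ⟨v₀, hv₀0, hv₀span⟩ := finrank_eq_one_iff'.mp hker1
  set d : Pl := (v₀ : Pl) with hd_def
  have hd0 : d ≠ 0 := fun h => hv₀0 (Subtype.ext h)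
  have hfd : f d = 0 := v₀.2
  have hspan : ∀ w : Pl, f w = 0 → ∃ t : ℝ, w = t • d := by
    intro w hw
    obtain ⟨t, ht⟩ := hv₀span ⟨w, hw⟩
    refine ⟨t, ?_⟩
    rw [hd_def, ← Submodule.coe_smul, ht]
  have hc : f p₀ = c := by rw [hℓ] at hp₀ℓ; exact hp₀ℓ
  have hparam : ∀ x ∈ ℓ, ∃ t : ℝ, x = p₀ + t • d := by
    intro x hx
    rw [hℓ] at hx
    have hx0 : f (x - p₀) = 0 := by rw [map_sub, hx, hc, sub_self]
    obtain ⟨t, ht⟩ := hspan _ hx0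
    exact ⟨t, by rw [← ht]; abel⟩
  have hmemℓ : ∀ t : ℝ, p₀ + t • d ∈ ℓ := by
    intro t
    rw [hℓ]
    simp [map_add, map_smul, hfd, hc]
  -- the set of parameters landing in K
  set S : Set ℝ := {t : ℝ | p₀ + t • d ∈ K} with hS_def
  have hcont : Continuous fun t : ℝ => p₀ + t • d :=
    continuous_const.add (continuous_id.smul continuous_const)
  have hScl : IsClosed S := hKcl.preimage hcont
  have hSbdd : Bornology.IsBounded S := by
    obtain ⟨M, hM⟩ := isBounded_iff_forall_norm_le.mp hKcpt.isBounded
    have hdn : 0 < ‖d‖ := norm_pos_iff.mpr hd0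
    apply (Metric.isBounded_Icc (-((M + ‖p₀‖) / ‖d‖)) ((M + ‖p₀‖) / ‖d‖)).subset
    intro t ht
    have h1 : ‖p₀ + t • d‖ ≤ M := hM _ ht
    have h2 : ‖t • d‖ ≤ M + ‖p₀‖ := by
      calc ‖t • d‖ = ‖(p₀ + t • d) - p₀‖ := by rw [add_sub_cancel_left]
        _ ≤ ‖p₀ + t • d‖ + ‖p₀‖ := norm_sub_le _ _
        _ ≤ M + ‖p₀‖ := by linarith
    rw [norm_smul, Real.norm_eq_abs] at h2
    rw [mem_Icc, ← abs_le, le_div_iff₀ hdn]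
    exact h2
  have hScpt : IsCompact S := Metric.isCompact_of_isClosed_isBounded hScl hSbdd
  have hSconv : Convex ℝ S := by
    intro t₁ h₁ t₂ h₂ u v hu hv huv
    simp only [hS_def, mem_setOf_eq] at h₁ h₂ ⊢
    have heq : p₀ + (u • t₁ + v • t₂) • d = u • (p₀ + t₁ • d) + v • (p₀ + t₂ • d) := by
      simp only [smul_eq_mul]
      match_scalars
      · linarith
      · ring
    rw [heq]
    exact hKconv h₁ h₂ hu hv huv
  have hS0 : (0 : ℝ) ∈ S := by
    simp only [hS_def, mem_setOf_eq, zero_smul, add_zero]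
    exact interior_subset hp₀int
  have hSne : S.Nonempty := ⟨0, hS0⟩
  set a := sInf S with ha_def
  set b := sSup S with hb_def
  have haS : a ∈ S := hScpt.sInf_mem hSne
  have hbS : b ∈ S := hScpt.sSup_mem hSne
  have hSIcc : S = Icc a b := by
    apply subset_antisymm
    · intro t ht
      exact ⟨csInf_le hScpt.bddBelow ht, le_csSup hScpt.bddAbove ht⟩
    · exact hSconv.ordConnected.out haS hbS
  -- the open preimage of the interior
  set U : Set ℝ := {t : ℝ | p₀ + t • d ∈ interior K} with hU_def
  have hUopen : IsOpen U := isOpen_interior.preimage hcont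
  have hUS : U ⊆ S := by
    intro t ht
    simp only [hU_def, mem_setOf_eq] at ht
    simp only [hS_def, mem_setOf_eq]
    exact interior_subset ht
  have hU0 : (0 : ℝ) ∈ U := by
    simp only [hU_def, mem_setOf_eq, zero_smul, add_zero]
    exact hp₀int
  have hab : a < 0 ∧ 0 < b := by
    obtain ⟨ε, hε, hball⟩ := Metric.isOpen_iff.mp hUopen 0 hU0
    have hmε : -(ε / 2) ∈ S := by
      apply hUS; apply hball
      rw [Metric.mem_ball, Real.dist_eq, abs_lt]
      constructor <;> linarith
    have hpε : ε / 2 ∈ S := by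
      apply hUS; apply hball
      rw [Metric.mem_ball, Real.dist_eq, abs_lt]
      constructor <;> linarith
    have h1 := csInf_le hScpt.bddBelow hmε
    have h2 := le_csSup hScpt.bddAbove hpε
    constructor <;> [linarith; linarith]
  -- strictly between the endpoints we are in the interior
  have hint' : ∀ t : ℝ, a < t → t < b → p₀ + t • d ∈ interior K := by
    intro t hat htb
    rcases lt_trichotomy t 0 with h | h | h
    · have ha0 : a < 0 := lt_trans hat h
      have hane : a ≠ 0 := ne_of_lt ha0
      have h1 : 0 < t / a := div_pos_of_neg_of_neg h ha0
      have h2 : t / a < 1 := by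
        have h3 : (t - a) / a < 0 := div_neg_of_pos_of_neg (by linarith) ha0
        rw [sub_div, div_self hane] at h3
        linarith
      have hmem : p₀ + t • d ∈ openSegment ℝ p₀ (p₀ + a • d) := by
        refine ⟨1 - t / a, t / a, by linarith, h1, by ring, ?_⟩
        match_scalars
        · ring
        · field_simp
      exact hKconv.openSegment_interior_self_subset_interior hp₀int haS hmem
    · rw [h]
      simpa using hp₀int
    · have hb0 : 0 < b := lt_trans h htb
      have hbne : b ≠ 0 := ne_of_gt hb0
      have h1 : 0 < t / b := div_pos h hb0
      have h2 : t / b < 1 := (div_lt_one hb0).mpr htb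
      have hmem : p₀ + t • d ∈ openSegment ℝ p₀ (p₀ + b • d) := by
        refine ⟨1 - t / b, t / b, by linarith, h1, by ring, ?_⟩
        match_scalars
        · ring
        · field_simp
      exact hKconv.openSegment_interior_self_subset_interior hp₀int hbS hmem
  -- endpoints are not interior
  have haU : a ∉ U := by
    intro ha
    obtain ⟨ε, hε, hball⟩ := Metric.isOpen_iff.mp hUopen a ha
    have hmem : a - ε / 2 ∈ S := by
      apply hUS; apply hball
      rw [Metric.mem_ball, Real.dist_eq, abs_lt]
      constructor <;> linarith
    have := csInf_le hScpt.bddBelow hmem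
    linarith
  have hbU : b ∉ U := by
    intro hb
    obtain ⟨ε, hε, hball⟩ := Metric.isOpen_iff.mp hUopen b hb
    have hmem : b + ε / 2 ∈ S := by
      apply hUS; apply hball
      rw [Metric.mem_ball, Real.dist_eq, abs_lt]
      constructor <;> linarith
    have := le_csSup hScpt.bddAbove hmem
    linarith
  set X : Pl := p₀ + a • d with hX_def
  set Y : Pl := p₀ + b • d with hY_def
  have hXY : X ≠ Y := by
    intro h
    have h1 : a • d = b • d := add_left_cancel h
    have h2 : (a - b) • d = 0 := by rw [sub_smul, h1, sub_self]
    rcases smul_eq_zero.mp h2 with h3 | h3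
    · have : a = b := by linarith [sub_eq_zero.mp (by exact_mod_cast h3)]
      linarith [hab.1, hab.2, this]
    · exact hd0 h3
  have hXfr : X ∈ frontier K := by rw [hfr]; exact ⟨haS, haU⟩
  have hYfr : Y ∈ frontier K := by rw [hfr]; exact ⟨hbS, hbU⟩
  -- the intersection is exactly {X, Y}
  have hsetfr : ℓ ∩ frontier K = {X, Y} := by
    ext z
    simp only [mem_inter_iff, mem_insert_iff, mem_singleton_iff]
    constructor
    · rintro ⟨hzℓ, hzfr⟩
      obtain ⟨t, rfl⟩ := hparam z hzℓ
      rw [hfr] at hzfr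
      have htS : t ∈ S := hzfr.1
      rw [hSIcc, mem_Icc] at htS
      rcases eq_or_lt_of_le htS.1 with h1 | h1
      · left; rw [hX_def, ← h1]
      rcases eq_or_lt_of_le htS.2 with h2 | h2
      · right; rw [hY_def, h2]
      · exact absurd (hint' t h1 h2) hzfr.2
    · rintro (rfl | rfl)
      exacts [⟨hmemℓ a, hXfr⟩, ⟨hmemℓ b, hYfr⟩]
  have hedg : ℓ ∩ edg L = {X, Y} := by rw [hconv']; exact hsetfr
  have hXedg : X ∈ edg L := by
    have : X ∈ ℓ ∩ edg L := by rw [hedg]; exact mem_insert _ _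
    exact this.2
  have hYedg : Y ∈ edg L := by
    have : Y ∈ ℓ ∩ edg L := by
      rw [hedg]; exact mem_insert_of_mem _ (mem_singleton _)
    exact this.2
  -- not all vertices coincide with a given point of K having a mate in K
  have hnall : ∀ Z W : Pl, W ∈ K → W ≠ Z → ∃ s, s < L.length ∧ vtx L s ≠ Z := by
    intro Z W hW hWZ
    by_contra hcon
    push_neg at hcon
    have hsub : vertexSet L ⊆ {Z} := by
      intro x hx
      obtain ⟨i, hi, hEq⟩ := List.mem_iff_getElem.mp hx
      have h1 := hcon i hi
      rw [vtx, Nat.mod_eq_of_lt hi, List.getD_eq_getElem L 0 hi] at h1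
      rw [← hEq, h1]
      rfl
    have hKsub : K ⊆ {Z} := by
      rw [hK, ← convexHull_singleton (𝕜 := ℝ) Z]
      exact convexHull_mono hsub
    exact hWZ (hKsub hW)
  have hXK : X ∈ K := haS
  have hYK : Y ∈ K := hbS
  obtain ⟨i, hi, hXh⟩ := exists_hseg L X hXedg (hnall X Y hYK hXY.symm)
  obtain ⟨j, hj, hYh⟩ := exists_hseg L Y hYedg (hnall Y X hXK hXY)
  -- the two edges are distinct
  have hij : i ≠ j := by
    intro h
    subst h
    have hM : p₀ + ((a + b) / 2) • d ∈ interior K :=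
      hint' _ (by linarith [hab.1, hab.2]) (by linarith [hab.1, hab.2])
    have hMseg : p₀ + ((a + b) / 2) • d ∈ segment ℝ X Y := by
      refine ⟨1 / 2, 1 / 2, by norm_num, by norm_num, by norm_num, ?_⟩
      rw [hX_def, hY_def]
      match_scalars
      · ring
      · ring
    have hsub : segment ℝ X Y ⊆ segment ℝ (vtx L i) (vtx L (i + 1)) :=
      (convex_segment _ _).segment_subset (hseg_subset_segment _ _ hXh)
        (hseg_subset_segment _ _ hYh)
    have hMedg : p₀ + ((a + b) / 2) • d ∈ edg L := by
      simp only [edg, mem_iUnion, Finset.mem_range]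
      exact ⟨i, hi, hsub hMseg⟩
    rw [hconv', hfr] at hMedg
    exact hMedg.2 hM
  rcases lt_or_gt_of_ne hij with h | h
  · exact ⟨X, Y, i, j, hXY, hedg, h, hj, hXh, hYh⟩
  · refine ⟨Y, X, j, i, hXY.symm, ?_, h, hi, hYh, hXh⟩
    rw [hedg]
    exact Set.pair_comm X Y
end
end

section
/- Let P = (V_0, …, V_{n-1}) be a quasi-convex polygon in ℝ² and let ℓ be a line supporting to conv P. Then ℓ ∩ conv P = [V_i, V_k] for some i, k ∈ {0, …, n-1}, and moreover V_i and V_k are extreme points of conv P. -/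
open Set

noncomputable section

lemma aux_extreme (K : Set Pl) (f : Pl →ₗ[ℝ] ℝ) (c : ℝ)
    (hle : ∀ x ∈ K, f x ≤ c) (v : Pl) (hv0 : v ≠ 0)
    (hker : ∀ x : Pl, f x = 0 → ∃ s : ℝ, x = s • v)
    (A : Pl) (hAK : A ∈ K) (hfA : f A = c)
    (hAmin : ∀ y ∈ K, f y = c → (inner ℝ v A : ℝ) ≤ inner ℝ v y) :
    A ∈ Set.extremePoints ℝ K := by
  rw [mem_extremePoints]
  refine ⟨hAK, fun y hy z hz hs => ?_⟩
  obtain ⟨a, b, ha, hb, hab, hE⟩ := hs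
  have hfE : a * f y + b * f z = c := by
    rw [← hfA, ← hE]; simp [map_add, map_smul]
  have h1 : f y ≤ c := hle y hy
  have h2 : f z ≤ c := hle z hz
  have hcc : a * c + b * c = c := by rw [← add_mul, hab, one_mul]
  have hfy : f y = c := by
    by_contra h
    have hlt : f y < c := lt_of_le_of_ne h1 h
    nlinarith [mul_pos ha (sub_pos.2 hlt), mul_nonneg hb.le (sub_nonneg.2 h2)]
  have hfz : f z = c := by
    by_contra h
    have hlt : f z < c := lt_of_le_of_ne h2 h
    nlinarith [mul_pos hb (sub_pos.2 hlt), mul_nonneg ha.le (sub_nonneg.2 h1)]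
  have hvv : (0:ℝ) < inner ℝ v v := by
    rw [real_inner_self_eq_norm_sq]; exact pow_pos (norm_pos_iff.2 hv0) 2
  have hgE : a * (inner ℝ v y : ℝ) + b * (inner ℝ v z : ℝ) = inner ℝ v A := by
    rw [← hE, inner_add_right, real_inner_smul_right, real_inner_smul_right]
  have hgy := hAmin y hy hfy
  have hgz := hAmin z hz hfz
  have hgg : a * (inner ℝ v A : ℝ) + b * (inner ℝ v A : ℝ) = inner ℝ v A := by
    rw [← add_mul, hab, one_mul]
  have hgy' : (inner ℝ v y : ℝ) = inner ℝ v A := by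
    by_contra h
    have hlt : (inner ℝ v A : ℝ) < inner ℝ v y := lt_of_le_of_ne hgy (Ne.symm h)
    nlinarith [mul_pos ha (sub_pos.2 hlt), mul_nonneg hb.le (sub_nonneg.2 hgz)]
  have hgz' : (inner ℝ v z : ℝ) = inner ℝ v A := by
    by_contra h
    have hlt : (inner ℝ v A : ℝ) < inner ℝ v z := lt_of_le_of_ne hgz (Ne.symm h)
    nlinarith [mul_pos hb (sub_pos.2 hlt), mul_nonneg ha.le (sub_nonneg.2 hgy)]
  have key : ∀ w : Pl, w ∈ K → f w = c → (inner ℝ v w : ℝ) = inner ℝ v A → w = A := by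
    intro w _ hfw hgw
    obtain ⟨s, hsw⟩ := hker (w - A) (by simp [map_sub, hfw, hfA])
    have : (inner ℝ v (w - A) : ℝ) = s * inner ℝ v v := by rw [hsw, real_inner_smul_right]
    rw [inner_sub_right, hgw, sub_self] at this
    have hs0 : s = 0 := by
      rcases mul_eq_zero.1 this.symm with h | h
      · exact h
      · exact absurd h (ne_of_gt hvv)
    have : w - A = 0 := by rw [hsw, hs0, zero_smul]
    exact sub_eq_zero.1 this
  exact ⟨key y hy hfy hgy', key z hz hfz hgz'⟩

/-- a line supporting to the convex hull of a quasi-convex polygon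
meets the hull exactly in a segment `[V_i, V_k]` joining two vertices which are
extreme points of the hull. -/
theorem stmt_15 (L : List Pl) (hqc : IsQuasiConvex L) (ℓ : Set Pl)
    (hsupp : IsSuppLine ℓ (convexHull ℝ (vertexSet L))) :
    ∃ i k : ℕ, i < L.length ∧ k < L.length ∧
      ℓ ∩ convexHull ℝ (vertexSet L) = segment ℝ (vtx L i) (vtx L k) ∧
      vtx L i ∈ Set.extremePoints ℝ (convexHull ℝ (vertexSet L)) ∧
      vtx L k ∈ Set.extremePoints ℝ (convexHull ℝ (vertexSet L)) := by
  obtain ⟨hne, f, c, hf0, hℓ, hle⟩ := hsupp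
  set S := vertexSet L with hSdef
  set K := convexHull ℝ S with hKdef
  have hSfin : S.Finite := L.finite_toSet
  have hKcomp : IsCompact K := hSfin.isCompact_convexHull (𝕜 := ℝ)
  -- a nonzero kernel vector
  have hninj : ¬ Function.Injective f := by
    intro h
    have h1 : Module.finrank ℝ Pl ≤ Module.finrank ℝ ℝ :=
      LinearMap.finrank_le_finrank_of_injective h
    have h2 : (2:ℕ) ≤ 1 := by
      rw [← finrank_euclideanSpace_fin (𝕜 := ℝ) (n := 2), ← Module.finrank_self ℝ]
      exact h1
    omega
  obtain ⟨v, hvker, hv0⟩ : ∃ v : Pl, v ∈ LinearMap.ker f ∧ v ≠ 0 := by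
    rw [← LinearMap.ker_eq_bot] at hninj
    exact Submodule.exists_mem_ne_zero_of_ne_bot hninj
  have hfv : f v = 0 := hvker
  have hkerspan : LinearMap.ker f = Submodule.span ℝ ({v} : Set Pl) := by
    symm
    apply Submodule.eq_of_le_of_finrank_eq
    · rwa [Submodule.span_singleton_le_iff_mem]
    · rw [finrank_span_singleton hv0]
      have hrn := LinearMap.finrank_range_add_finrank_ker f
      have hr1 : Module.finrank ℝ (LinearMap.range f) = 1 := by
        have hle1 : Module.finrank ℝ (LinearMap.range f) ≤ 1 :=
          (Submodule.finrank_le _).trans_eq (Module.finrank_self ℝ)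
        have hne0 : LinearMap.range f ≠ ⊥ := by
          simpa [LinearMap.range_eq_bot] using hf0
        have hne0' : Module.finrank ℝ (LinearMap.range f) ≠ 0 := by
          intro h
          exact hne0 (Submodule.finrank_eq_zero.1 h)
        omega
      have hPl : Module.finrank ℝ Pl = 2 := finrank_euclideanSpace_fin
      rw [hr1, hPl] at hrn
      omega
  have hker : ∀ x : Pl, f x = 0 → ∃ s : ℝ, x = s • v := by
    intro x hx
    have : x ∈ Submodule.span ℝ ({v} : Set Pl) := by
      rw [← hkerspan]; exact hx
    obtain ⟨s, hs⟩ := Submodule.mem_span_singleton.1 this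
    exact ⟨s, hs.symm⟩
  have hker' : ∀ x : Pl, f x = 0 → ∃ s : ℝ, x = s • (-v) := by
    intro x hx
    obtain ⟨s, hs⟩ := hker x hx
    exact ⟨-s, by rw [hs]; simp⟩
  have hfc : Continuous f := f.continuous_of_finiteDimensional
  have hℓclosed : IsClosed ℓ := by
    rw [hℓ]; exact isClosed_eq hfc continuous_const
  have hFcomp : IsCompact (ℓ ∩ K) := hKcomp.inter_left hℓclosed
  have hgcont : Continuous (fun x : Pl => (inner ℝ v x : ℝ)) :=
    continuous_const.inner continuous_id
  obtain ⟨A, hAF, hAmin⟩ := hFcomp.exists_isMinOn hne hgcont.continuousOn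
  obtain ⟨B, hBF, hBmax⟩ := hFcomp.exists_isMaxOn hne hgcont.continuousOn
  have hfA : f A = c := by have := hAF.1; rwa [hℓ] at this
  have hfB : f B = c := by have := hBF.1; rwa [hℓ] at this
  have hmemF : ∀ y : Pl, y ∈ K → f y = c → y ∈ ℓ ∩ K := by
    intro y hy hfy
    exact ⟨by rw [hℓ]; exact hfy, hy⟩
  have hAext : A ∈ Set.extremePoints ℝ K := by
    apply aux_extreme K f c hle v hv0 hker A hAF.2 hfA
    intro y hy hfy
    exact isMinOn_iff.1 hAmin y (hmemF y hy hfy)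
  have hBext : B ∈ Set.extremePoints ℝ K := by
    apply aux_extreme K f c hle (-v) (neg_ne_zero.2 hv0) hker' B hBF.2 hfB
    intro y hy hfy
    have h := isMaxOn_iff.1 hBmax y (hmemF y hy hfy)
    simp only [inner_neg_left]
    linarith [h]
  -- segment equality
  have hvv : (0:ℝ) < inner ℝ v v := by
    rw [real_inner_self_eq_norm_sq]; exact pow_pos (norm_pos_iff.2 hv0) 2
  have hseg : ℓ ∩ K = segment ℝ A B := by
    apply Subset.antisymm
    · intro x hx
      have hfx : f x = c := by have := hx.1; rwa [hℓ] at this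
      obtain ⟨s, hsx⟩ := hker (x - A) (by simp [map_sub, hfx, hfA])
      obtain ⟨t, htB⟩ := hker (B - A) (by simp [map_sub, hfB, hfA])
      have hix : (inner ℝ v x : ℝ) = inner ℝ v A + s * inner ℝ v v := by
        have : (inner ℝ v (x - A) : ℝ) = s * inner ℝ v v := by rw [hsx, real_inner_smul_right]
        rw [inner_sub_right] at this; linarith
      have hiB : (inner ℝ v B : ℝ) = inner ℝ v A + t * inner ℝ v v := by
        have : (inner ℝ v (B - A) : ℝ) = t * inner ℝ v v := by rw [htB, real_inner_smul_right]
        rw [inner_sub_right] at this; linarith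
      have hAx : (inner ℝ v A : ℝ) ≤ inner ℝ v x := isMinOn_iff.1 hAmin x hx
      have hxB : (inner ℝ v x : ℝ) ≤ inner ℝ v B := isMaxOn_iff.1 hBmax x hx
      have hs0 : 0 ≤ s := by nlinarith
      have hst : s ≤ t := by nlinarith
      have hx' : x = A + s • v := by
        rw [← hsx]; abel
      have hB' : B = A + t • v := by
        rw [← htB]; abel
      by_cases ht0 : t = 0
      · have hs00 : s = 0 := le_antisymm (ht0 ▸ hst) hs0
        have : x = A := by rw [hx', hs00, zero_smul, add_zero]
        rw [this]; exact left_mem_segment ℝ A B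
      · have htpos : 0 < t := lt_of_le_of_ne (hs0.trans hst) (Ne.symm ht0)
        refine ⟨1 - s/t, s/t, ?_, ?_, by ring, ?_⟩
        · have : s/t ≤ 1 := (div_le_one htpos).2 hst
          linarith
        · positivity
        · rw [hB', hx', smul_add, ← add_assoc, ← add_smul, sub_add_cancel, one_smul,
            smul_smul, div_mul_cancel₀ s ht0]
    · have hFconv : Convex ℝ (ℓ ∩ K) := by
        have h1 : Convex ℝ ℓ := by
          rw [hℓ]; exact convex_hyperplane f.isLinear c
        exact h1.inter (convex_convexHull ℝ S)
      exact hFconv.segment_subset hAF hBF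
  -- indices
  have hAS : A ∈ S := extremePoints_convexHull_subset hAext
  have hBS : B ∈ S := extremePoints_convexHull_subset hBext
  obtain ⟨⟨i, hi⟩, hgi⟩ := List.mem_iff_get.1 hAS
  obtain ⟨⟨k, hk⟩, hgk⟩ := List.mem_iff_get.1 hBS
  have hvi : vtx L i = A := by
    rw [← hgi]
    unfold vtx
    rw [Nat.mod_eq_of_lt hi, List.getD_eq_getElem L 0 hi, List.get_eq_getElem]
  have hvk : vtx L k = B := by
    rw [← hgk]
    unfold vtx
    rw [Nat.mod_eq_of_lt hk, List.getD_eq_getElem L 0 hk, List.get_eq_getElem]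
  exact ⟨i, k, hi, hk, by rw [hvi, hvk]; exact hseg, by rw [hvi]; exact hAext,
    by rw [hvk]; exact hBext⟩
end
end
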